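/- In a symmetric monoidal category with a poalgebra P, with H^n := id_n ⊗ η : n → n+1, S^n := id_n ⊗ σ : n+1 → n+1, and X^n_I := S^n ∘ W^n_I ∘ H^n for I ⊆ [n], the exchange identity X^{n+1}_J ∘ X^n_I = G^n ∘ X^{n+1}_I ∘ X^n_J holds for all I, J ⊆ [n], where G^n = id_n ⊗ γ_{1,1} and W^n_I is the composite of the idempotent commuting morphisms W^n_i for i ∈ I. -/

import Mathlib

/-- The data of a category with natural numbers as objects, together with a
tensor product acting as addition on objects (a candidate strict monoidal
structure). Composition is written in diagrammatic order. -/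
structure MonCatN : Type 1 where
  Hom : ℕ → ℕ → Type
  id : ∀ n : ℕ, Hom n n
  comp : ∀ {m n p : ℕ}, Hom m n → Hom n p → Hom m p
  tensor : ∀ {m n m' n' : ℕ}, Hom m n → Hom m' n' → Hom (m + m') (n + n')

/-- Transport of morphisms along equalities of objects. -/
def MonCatN.cst (C : MonCatN) {a b c d : ℕ} (h1 : a = c) (h2 : b = d)
    (f : C.Hom a b) : C.Hom c d :=
  cast (by rw [h1, h2] : C.Hom a b = C.Hom c d) f

/-- The axioms of a strict monoidal category structure on `C`. -/
structure IsStrictMon (C : MonCatN) : Prop where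
  id_comp : ∀ {m n} (f : C.Hom m n), C.comp (C.id m) f = f
  comp_id : ∀ {m n} (f : C.Hom m n), C.comp f (C.id n) = f
  comp_assoc : ∀ {m n p q} (f : C.Hom m n) (g : C.Hom n p) (h : C.Hom p q),
    C.comp (C.comp f g) h = C.comp f (C.comp g h)
  tensor_id : ∀ m n, C.tensor (C.id m) (C.id n) = C.id (m + n)
  tensor_comp : ∀ {m n p m' n' p'} (f₁ : C.Hom m n) (g₁ : C.Hom n p)
    (f₂ : C.Hom m' n') (g₂ : C.Hom n' p'),
    C.tensor (C.comp f₁ g₁) (C.comp f₂ g₂) = C.comp (C.tensor f₁ f₂) (C.tensor g₁ g₂)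
  tensor_assoc : ∀ {m n m' n' m'' n''} (f : C.Hom m n) (g : C.Hom m' n')
    (h : C.Hom m'' n''),
    C.tensor (C.tensor f g) h =
      C.cst (Nat.add_assoc m m' m'').symm (Nat.add_assoc n n' n'').symm
        (C.tensor f (C.tensor g h))
  tensor_unit_l : ∀ {m n} (f : C.Hom m n),
    C.tensor (C.id 0) f = C.cst (Nat.zero_add m).symm (Nat.zero_add n).symm f
  tensor_unit_r : ∀ {m n} (f : C.Hom m n), C.tensor f (C.id 0) = f

/-- The axioms of a strict symmetric monoidal category structure on `C` with
symmetry family `γ`. -/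
structure IsStrictSymMon (C : MonCatN) (γ : ∀ m n : ℕ, C.Hom (m + n) (n + m))
    extends IsStrictMon C : Prop where
  braiding_natural : ∀ {m n m' n'} (f : C.Hom m n) (g : C.Hom m' n'),
    C.comp (C.tensor f g) (γ n n') = C.comp (γ m m') (C.tensor g f)
  symmetry : ∀ m n, C.comp (γ m n) (γ n m) = C.id (m + n)
  gamma_zero : ∀ n, γ 0 n = C.cst (Nat.zero_add n).symm (Nat.add_zero n).symm (C.id n)
  hexagon : ∀ m n p,
    γ (m + n) p =
      C.comp
        (C.cst (by omega) (by omega) (C.tensor (C.id m) (γ n p)) :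
          C.Hom ((m + n) + p) (m + (p + n)))
        (C.cst (by omega) (by omega) (C.tensor (γ m p) (C.id n)) :
          C.Hom (m + (p + n)) (p + (m + n)))

/-- A poalgebra in `C` (on the object `1`): a qualitative bicommutative
bialgebra `(η, μ, ε, δ)` together with `σ : 1 → 1` satisfying the
transitivity axiom `μ ∘ (id ⊗ σ) ∘ δ = σ`. -/
structure PoalgebraIn (C : MonCatN) (γ : ∀ m n : ℕ, C.Hom (m + n) (n + m)) where
  η : C.Hom 0 1
  μ : C.Hom 2 1
  ε : C.Hom 1 0
  δ : C.Hom 1 2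
  σ : C.Hom 1 1
  unit_l : C.comp (C.tensor η (C.id 1)) μ = C.id 1
  unit_r : C.comp (C.tensor (C.id 1) η) μ = C.id 1
  mul_assoc : C.comp (C.tensor μ (C.id 1)) μ = C.comp (C.tensor (C.id 1) μ) μ
  mul_comm : C.comp (γ 1 1) μ = μ
  counit_l : C.comp δ (C.tensor ε (C.id 1)) = C.id 1
  counit_r : C.comp δ (C.tensor (C.id 1) ε) = C.id 1
  comul_coassoc : C.comp δ (C.tensor δ (C.id 1)) = C.comp δ (C.tensor (C.id 1) δ)
  comul_cocomm : C.comp δ (γ 1 1) = δ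
  bialg : C.comp μ δ =
    C.comp (C.tensor δ δ)
      (C.comp
        ((C.tensor (C.id 1) ((C.tensor (γ 1 1) (C.id 1) : C.Hom 3 3)) : C.Hom 4 4))
        ((C.tensor μ μ : C.Hom 4 2)))
  counit_unit : C.comp η ε = C.id 0
  qualitative : C.comp δ μ = C.id 1
  transitivity : C.comp δ (C.comp (C.tensor (C.id 1) σ) μ) = σ

section Defs

variable (C : MonCatN) (γ : ∀ m n : ℕ, C.Hom (m + n) (n + m)) (P : PoalgebraIn C γ)

/-- `W^n_i : n+1 → n+1`: copy the `i`-th strand with `δ`, move the copy past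
the strands `i+1, …, n-1` with the symmetry, and merge it into the last strand
with `μ` (for `i ∈ [n]`; identity otherwise). -/
def Wd (n i : ℕ) : C.Hom (n + 1) (n + 1) :=
  if h : i < n then
    C.comp
      (C.cst (by omega) (by omega)
        (C.tensor (C.id i) (C.tensor P.δ (C.id (n - i)))) :
          C.Hom (n + 1) (i + (2 + (n - i))))
      (C.comp
        (C.cst (by omega) (by omega)
          (C.tensor (C.id (i + 1)) (C.tensor (γ 1 (n - i - 1)) (C.id 1))) :
            C.Hom (i + (2 + (n - i))) (n + 2))
        (C.tensor (C.id n) P.μ))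
  else C.id (n + 1)

/-- `W^n_I`: the composite of the `W^n_i` for `i ∈ I` (well defined up to the
commutation and idempotence of the `W^n_i`); `W^n_∅ = id`. -/
noncomputable def WId (n : ℕ) (I : Finset ℕ) : C.Hom (n + 1) (n + 1) :=
  (I.sort (· ≤ ·)).foldl (fun g i => C.comp g (Wd C γ P n i)) (C.id (n + 1))

/-- `H^n = id_n ⊗ η : n → n+1`. -/
def Hd (n : ℕ) : C.Hom n (n + 1) := C.tensor (C.id n) P.η

/-- `S^n = id_n ⊗ σ : n+1 → n+1`. -/
def Sd (n : ℕ) : C.Hom (n + 1) (n + 1) := C.tensor (C.id n) P.σ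

/-- `G^n = id_n ⊗ γ_{1,1} : n+2 → n+2`. -/
def Gd (n : ℕ) : C.Hom (n + 2) (n + 2) := C.tensor (C.id n) (γ 1 1)

/-- `G^n_i = id_i ⊗ γ ⊗ id_{n-i} : n+2 → n+2` (for `i ≤ n`; identity
otherwise). -/
def Gdi (n i : ℕ) : C.Hom (n + 2) (n + 2) :=
  if h : i ≤ n then
    C.cst (by omega) (by omega)
      (C.tensor (C.tensor (C.id i) (γ 1 1)) (C.id (n - i)))
  else C.id (n + 2)

/-- `X^n_I = S^n ∘ W^n_I ∘ H^n : n → n+1`. -/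
noncomputable def Xd (n : ℕ) (I : Finset ℕ) : C.Hom n (n + 1) :=
  C.comp (Hd C γ P n) (C.comp (WId C γ P n I) (Sd C γ P n))

/-- The composite `X^{m+k-1}_{I_{k-1}} ∘ … ∘ X^m_{I_0}` of a list of `X`'s,
written in diagrammatic order. -/
noncomputable def Xchain (m : ℕ) : ∀ Is : List (Finset ℕ), C.Hom m (m + Is.length)
  | [] => C.id m
  | I :: rest =>
      C.comp (Xd C γ P m I)
        (C.cst rfl (by simp; omega) (Xchain (m + 1) rest))

/-- The adjacent transposition `τ_p` exchanging `p` and `p+1`, acting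
elementwise on a finite set of naturals. -/
def tauF (p : ℕ) (I : Finset ℕ) : Finset ℕ :=
  I.image (fun a => if a = p then p + 1 else if a = p + 1 then p else a)

end Defs

/-! Auxiliary machinery for the proof of `X_exchange`. -/

namespace XProof

variable {C : MonCatN} {γ : ∀ m n : ℕ, C.Hom (m + n) (n + m)}

/-- Heterogeneous equality of morphisms. -/
def E {a b c d : ℕ} (f : C.Hom a b) (g : C.Hom c d) : Prop :=
  a = c ∧ b = d ∧ HEq f g

protected theorem E.rfl {a b : ℕ} {f : C.Hom a b} : E f f := ⟨rfl, rfl, HEq.rfl⟩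

protected theorem E.of_eq {a b : ℕ} {f g : C.Hom a b} (h : f = g) : E f g :=
  ⟨rfl, rfl, heq_of_eq h⟩

protected theorem E.symm {a b c d : ℕ} {f : C.Hom a b} {g : C.Hom c d} (h : E f g) : E g f :=
  ⟨h.1.symm, h.2.1.symm, h.2.2.symm⟩

protected theorem E.trans {a b c d e x : ℕ} {f : C.Hom a b} {g : C.Hom c d} {h : C.Hom e x}
    (h1 : E f g) (h2 : E g h) : E f h :=
  ⟨h1.1.trans h2.1, h1.2.1.trans h2.2.1, h1.2.2.trans h2.2.2⟩

instance {a b c d e x : ℕ} :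
    Trans (E (C := C) (a := a) (b := b) (c := c) (d := d))
 (E (C := C) (a := c) (b := d) (c := e) (d := x))
 (E (C := C) (a := a) (b := b) (c := e) (d := x)) :=
  ⟨E.trans⟩

protected theorem E.eq {a b : ℕ} {f g : C.Hom a b} (h : E f g) : f = g := eq_of_heq h.2.2

protected theorem E.cst {a b c d : ℕ} (h1 : a = c) (h2 : b = d) (f : C.Hom a b) :
    E (C.cst h1 h2 f) f := by
  subst h1; subst h2
  exact ⟨rfl, rfl, heq_of_eq (cast_eq _ f)⟩

protected theorem E.comp {a b c a' b' c' : ℕ} {f : C.Hom a b} {g : C.Hom b c}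
    {f' : C.Hom a' b'} {g' : C.Hom b' c'} (h1 : E f f') (h2 : E g g') :
    E (C.comp f g) (C.comp f' g') := by
  obtain ⟨ea, eb, hf⟩ := h1
  obtain ⟨-, ec, hg⟩ := h2
  subst ea; subst eb; subst ec
  rw [eq_of_heq hf, eq_of_heq hg]
  exact E.rfl

protected theorem E.tensor {a b c d a' b' c' d' : ℕ} {f : C.Hom a b} {g : C.Hom c d}
    {f' : C.Hom a' b'} {g' : C.Hom c' d'} (h1 : E f f') (h2 : E g g') :
    E (C.tensor f g) (C.tensor f' g') := by
  obtain ⟨ea, eb, hf⟩ := h1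
  obtain ⟨ec, ed, hg⟩ := h2
  subst ea; subst eb; subst ec; subst ed
  rw [eq_of_heq hf, eq_of_heq hg]
  exact E.rfl

/-- Composition with a transport in the middle, so that provably equal
(but not definitionally equal) objects can be composed along. -/
def hcp {C : MonCatN} {a b c d : ℕ} (f : C.Hom a b) (g : C.Hom c d)
    (h : b = c := by omega) : C.Hom a d :=
  C.comp f (C.cst h.symm rfl g)

protected theorem E.hcp {a b c d a' b' c' d' : ℕ} {f : C.Hom a b} {g : C.Hom c d}
    {f' : C.Hom a' b'} {g' : C.Hom c' d'} {h : b = c} {h' : b' = c'}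
    (h1 : E f f') (h2 : E g g') :
    E (XProof.hcp f g h) (XProof.hcp f' g' h') :=
  E.comp h1 ((E.cst _ _ _).trans (h2.trans (E.cst _ _ _).symm))

theorem hcp_eq {a b c : ℕ} (f : C.Hom a b) (g : C.Hom b c) (h : b = b) :
    hcp f g h = C.comp f g := by
  show C.comp f (C.cst h.symm rfl g) = C.comp f g
  rw [(E.cst h.symm rfl g).eq]

/-- `E`-version: `hcp` of matching morphisms is composition. -/
protected theorem E.hcp_comp {a b c : ℕ} (f : C.Hom a b) (g : C.Hom b c) (h : b = b) :
    E (hcp f g h) (C.comp f g) := E.of_eq (hcp_eq f g h)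

end XProof

namespace XProof

variable {C : MonCatN} {γ : ∀ m n : ℕ, C.Hom (m + n) (n + m)}

theorem Eid {m n : ℕ} (h : m = n) : E (C.id m) (C.id n) := by subst h; exact E.rfl

section Ax
variable (hC : IsStrictSymMon C γ)
include hC

theorem Ehcp_assoc {a b c d e x : ℕ}
    (f : C.Hom a b) (g : C.Hom c d) (k : C.Hom e x)
    (h1 : b = c) (h2 : d = e) (h3 : d = e) (h4 : b = c) :
    E (hcp (hcp f g h1) k h2) (hcp f (hcp g k h3) h4) := by
  subst h1; subst h2
  simp only [hcp_eq]
  exact E.of_eq (hC.comp_assoc f g k)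

theorem Ehcp_id_left {a b c : ℕ} (f : C.Hom b c) (h : a = b) :
    E (hcp (C.id a) f h) f := by
  subst h; simp only [hcp_eq]; exact E.of_eq (hC.id_comp f)

theorem Ehcp_id_right {a b c : ℕ} (f : C.Hom a b) (h : b = c) :
    E (hcp f (C.id c) h) f := by
  subst h; simp only [hcp_eq]; exact E.of_eq (hC.comp_id f)

theorem Einterchange {a1 b1 c1 a2 b2 c2 : ℕ}
    (f₁ : C.Hom a1 b1) (g₁ : C.Hom b1 c1) (f₂ : C.Hom a2 b2) (g₂ : C.Hom b2 c2) :
    E (hcp (C.tensor f₁ f₂) (C.tensor g₁ g₂) rfl) (C.tensor (C.comp f₁ g₁) (C.comp f₂ g₂)) := by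
  simp only [hcp_eq]
  exact E.of_eq (hC.tensor_comp f₁ g₁ f₂ g₂).symm

/-- Interchange, general heterogeneous form. -/
theorem Einter {a1 b1 c1 a2 b2 c2 b1' b2' : ℕ}
    (f₁ : C.Hom a1 b1) (g₁ : C.Hom b1' c1) (f₂ : C.Hom a2 b2) (g₂ : C.Hom b2' c2)
    (h1 : b1 = b1') (h2 : b2 = b2') (h : b1 + b2 = b1' + b2') :
    E (hcp (C.tensor f₁ f₂) (C.tensor g₁ g₂) h)
      (C.tensor (hcp f₁ g₁ h1) (hcp f₂ g₂ h2)) := by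
  subst h1; subst h2
  simp only [hcp_eq]
  exact E.of_eq (hC.tensor_comp f₁ g₁ f₂ g₂).symm

theorem Etensor_assoc {m n m' n' m'' n'' : ℕ} (f : C.Hom m n) (g : C.Hom m' n')
    (h : C.Hom m'' n'') :
    E (C.tensor (C.tensor f g) h) (C.tensor f (C.tensor g h)) :=
  (E.of_eq (hC.tensor_assoc f g h)).trans (E.cst _ _ _)

theorem Eunit_l {m n : ℕ} (f : C.Hom m n) : E (C.tensor (C.id 0) f) f :=
  (E.of_eq (hC.tensor_unit_l f)).trans (E.cst _ _ _)

theorem Enat {m n m' n' : ℕ} (f : C.Hom m n) (g : C.Hom m' n') :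
    E (hcp (C.tensor f g) (γ n n') rfl) (hcp (γ m m') (C.tensor g f) rfl) := by
  simp only [hcp_eq]
  exact E.of_eq (hC.braiding_natural f g)

theorem Esymm (m n : ℕ) : E (hcp (γ m n) (γ n m) rfl) (C.id (m + n)) := by
  simp only [hcp_eq]
  exact E.of_eq (hC.symmetry m n)

theorem Egamma0l (n : ℕ) : E (γ 0 n) (C.id n) :=
  (E.of_eq (hC.gamma_zero n)).trans (E.cst _ _ _)

theorem Egamma0r (n : ℕ) : E (γ n 0) (C.id n) := by
  have h0 : E (γ n 0) (C.comp (γ n 0) (γ 0 n)) := by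
    refine (E.of_eq (hC.comp_id (γ n 0))).symm.trans (E.comp E.rfl ?_)
    exact (Eid (by omega : 0 + n = n)).trans (Egamma0l hC n).symm
  exact h0.trans ((E.of_eq (hC.symmetry n 0)).trans (Eid (by omega)))

theorem Ehex1 (m n p : ℕ) :
    E (γ (m + n) p)
      (hcp (C.tensor (C.id m) (γ n p)) (C.tensor (γ m p) (C.id n)) (by omega)) := by
  unfold hcp
  refine (E.of_eq (hC.hexagon m n p)).trans ?_
  exact E.comp (E.cst _ _ _) ((E.cst _ _ _).trans (E.cst _ _ _).symm)

end Ax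
end XProof

namespace XProof

local notation:70 f:70 " ⊠ " g:71 => MonCatN.tensor _ f g
local notation:60 f:60 " ⬙ " g:61 => XProof.hcp f g (by omega)
local infix:50 " ≃' " => XProof.E

section Dev
variable {C : MonCatN} {γ : ∀ m n : ℕ, C.Hom (m + n) (n + m)}
variable (hC : IsStrictSymMon C γ)
include hC

/-- strip a common `id`-prefix under tensor of a composition -/
theorem ETL (m : ℕ) {a b b' c : ℕ} (f : C.Hom a b) (g : C.Hom b' c) (h : b = b') :
    E (C.id m ⊠ (f ⬙ g)) ((C.id m ⊠ f) ⬙ (C.id m ⊠ g)) := by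
  subst h
  refine E.trans ?_ (Einter hC (C.id m) (C.id m) f g rfl rfl rfl).symm
  exact E.tensor (E.of_eq (hC.id_comp (C.id m))).symm E.rfl

theorem ETR (k : ℕ) {a b b' c : ℕ} (f : C.Hom a b) (g : C.Hom b' c) (h : b = b') :
    E ((f ⬙ g) ⊠ C.id k) ((f ⊠ C.id k) ⬙ (g ⊠ C.id k)) := by
  subst h
  refine E.trans ?_ (Einter hC f g (C.id k) (C.id k) rfl rfl rfl).symm
  exact E.tensor E.rfl (E.of_eq (hC.id_comp (C.id k))).symm

theorem Egr1 {a b : ℕ} (m n : ℕ) (f : C.Hom a b) :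
    E (C.id m ⊠ (C.id n ⊠ f)) (C.id (m + n) ⊠ f) :=
  (Etensor_assoc hC (C.id m) (C.id n) f).symm.trans
    (E.tensor (E.of_eq (hC.tensor_id m n)) E.rfl)

theorem Egr2 {a b : ℕ} (m n : ℕ) (f : C.Hom a b) :
    E ((f ⊠ C.id m) ⊠ C.id n) (f ⊠ C.id (m + n)) :=
  (Etensor_assoc hC f (C.id m) (C.id n)).trans
    (E.tensor E.rfl (E.of_eq (hC.tensor_id m n)))


theorem Ecl {a b c d c' d' : ℕ} {f : C.Hom a b} {g : C.Hom c d} {g' : C.Hom c' d'}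
    {h : b = c} {h' : b = c'} (hg : E g g') : E (hcp f g h) (hcp f g' h') :=
  E.hcp E.rfl hg

theorem Ecr {a b a' b' c d : ℕ} {f : C.Hom a b} {f' : C.Hom a' b'} {g : C.Hom c d}
    {h : b = c} {h' : b' = c} (hf : E f f') : E (hcp f g h) (hcp f' g h') :=
  E.hcp hf E.rfl

theorem EA {a b c d e x : ℕ} (h1 : b = c) (h2 : d = e)
    (f : C.Hom a b) (g : C.Hom c d) (k : C.Hom e x) :
    E ((f ⬙ g) ⬙ k) (f ⬙ (g ⬙ k)) :=
  Ehcp_assoc hC f g k h1 h2 h2 h1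

theorem Ehex2 (m n p : ℕ) :
    E (γ m (n + p)) ((γ m n ⊠ C.id p) ⬙ (C.id n ⊠ γ m p)) := by
  have inner2 : E ((C.id n ⊠ γ m p) ⬙ (C.id n ⊠ γ p m)) (C.id (n + (m + p))) := by
    refine (Einter hC (C.id n) (C.id n) (γ m p) (γ p m) rfl rfl rfl).trans ?_
    refine (E.tensor (E.of_eq (hC.id_comp (C.id n))) (Esymm hC m p)).trans ?_
    exact E.of_eq (hC.tensor_id n (m + p))
  have hA : E (((γ m n ⊠ C.id p) ⬙ (C.id n ⊠ γ m p)) ⬙ γ (n + p) m)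
      (C.id (m + (n + p))) := by
    calc (((γ m n ⊠ C.id p) ⬙ (C.id n ⊠ γ m p)) ⬙ γ (n + p) m)
        ≃' (((γ m n ⊠ C.id p) ⬙ (C.id n ⊠ γ m p)) ⬙
          ((C.id n ⊠ γ p m) ⬙ (γ n m ⊠ C.id p))) := Ecl hC (Ehex1 hC n p m)
      _ ≃' ((γ m n ⊠ C.id p) ⬙ ((C.id n ⊠ γ m p) ⬙
          ((C.id n ⊠ γ p m) ⬙ (γ n m ⊠ C.id p)))) :=
        EA hC (by omega) (by omega) _ _ _
      _ ≃' ((γ m n ⊠ C.id p) ⬙ (((C.id n ⊠ γ m p) ⬙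
          (C.id n ⊠ γ p m)) ⬙ (γ n m ⊠ C.id p))) :=
        Ecl hC ((EA hC (by omega) (by omega) _ _ _).symm)
      _ ≃' ((γ m n ⊠ C.id p) ⬙ ((C.id (n + (m + p))) ⬙ (γ n m ⊠ C.id p))) :=
        Ecl hC (Ecr hC inner2)
      _ ≃' ((γ m n ⊠ C.id p) ⬙ (γ n m ⊠ C.id p)) :=
        Ecl hC (Ehcp_id_left hC (C.tensor (γ n m) (C.id p)) (by omega))
      _ ≃' ((γ m n ⬙ γ n m) ⊠ (C.id p ⬙ C.id p)) :=
        Einter hC _ _ _ _ rfl rfl (by omega)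
      _ ≃' (C.id (m + n) ⊠ C.id p) :=
        E.tensor (Esymm hC m n) (E.of_eq (hcp_eq _ _ rfl) |>.trans (E.of_eq (hC.id_comp _)))
      _ ≃' (C.id (m + n + p)) := E.of_eq (hC.tensor_id (m + n) p)
      _ ≃' (C.id (m + (n + p))) := Eid (by omega)
  calc (γ m (n + p)) ≃' ((C.id (m + (n + p))) ⬙ γ m (n + p)) :=
      (Ehcp_id_left hC _ rfl).symm
    _ ≃' ((((γ m n ⊠ C.id p) ⬙ (C.id n ⊠ γ m p)) ⬙ γ (n + p) m) ⬙ γ m (n + p)) :=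
      Ecr hC hA.symm
    _ ≃' (((γ m n ⊠ C.id p) ⬙ (C.id n ⊠ γ m p)) ⬙ (γ (n + p) m ⬙ γ m (n + p))) :=
      EA hC (by omega) (by omega) _ _ _
    _ ≃' (((γ m n ⊠ C.id p) ⬙ (C.id n ⊠ γ m p)) ⬙ (C.id (n + p + m))) :=
      Ecl hC (Esymm hC (n + p) m)
    _ ≃' ((γ m n ⊠ C.id p) ⬙ (C.id n ⊠ γ m p)) := Ehcp_id_right hC _ _



omit hC in
theorem EcompE {a b c a' b' b'' c' : ℕ} {A : C.Hom a b} {X : C.Hom b c}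
    {A' : C.Hom a' b'} {X' : C.Hom b'' c'} (hA : E A A') (hX : E X X')
    (h : b' = b'') : E (C.comp A X) (hcp A' X' h) := by
  obtain ⟨e1, e2, hh⟩ := hA
  obtain ⟨e3, e4, hh2⟩ := hX
  subst e1; subst e2; subst e3; subst e4
  rw [hcp_eq, eq_of_heq hh, eq_of_heq hh2]
  exact E.rfl

theorem Eg1split (k b : ℕ) :
    E (γ 1 (k + b)) ((γ 1 k ⊠ C.id b) ⬙ (C.id k ⊠ γ 1 b)) := Ehex2 hC 1 k b

theorem Egamma_congr {m n m' n' : ℕ} (h1 : m = m') (h2 : n = n') :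
    E (γ m n) (γ m' n') := by subst h1; subst h2; exact E.rfl

theorem Esplit1 {a a' b b' : ℕ} (A : C.Hom a a') (g : C.Hom b b') :
    E (A ⊠ g) ((A ⊠ C.id b) ⬙ (C.id a' ⊠ g)) :=
  ((Einter hC A (C.id a') (C.id b) g rfl rfl rfl).trans
    (E.tensor (Ehcp_id_right hC A rfl) (Ehcp_id_left hC g rfl))).symm

theorem Esplit2 {a a' b b' : ℕ} (A : C.Hom a a') (g : C.Hom b b') :
    E (A ⊠ g) ((C.id a ⊠ g) ⬙ (A ⊠ C.id b')) :=
  ((Einter hC (C.id a) A g (C.id b') rfl rfl rfl).trans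
    (E.tensor (Ehcp_id_left hC A rfl) (Ehcp_id_right hC g rfl))).symm

/-- commuting morphisms with disjoint supports -/
theorem Edisj {a a' b b' : ℕ} (A : C.Hom a a') (g : C.Hom b b') :
    E ((A ⊠ C.id b) ⬙ (C.id a' ⊠ g)) ((C.id a ⊠ g) ⬙ (A ⊠ C.id b')) :=
  (Esplit1 hC A g).symm.trans (Esplit2 hC A g)

theorem Ehex11 (b : ℕ) :
    E ((C.id 1 ⊠ γ 1 b) ⬙ (γ 1 b ⊠ C.id 1)) (γ 2 b) :=
  ((Egamma_congr hC (by omega : (2:ℕ) = 1 + 1) rfl).trans (Ehex1 hC 1 1 b)).symm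

theorem Enat2b (b : ℕ) :
    E ((γ 1 1 ⊠ C.id b) ⬙ γ 2 b) (γ 2 b ⬙ (C.id b ⊠ γ 1 1)) := by
  calc ((γ 1 1 ⊠ C.id b) ⬙ γ 2 b)
      ≃' ((γ 1 1 ⊠ C.id b) ⬙ γ (1 + 1) b) := Ecl hC (Egamma_congr hC (by omega) rfl)
    _ ≃' (γ (1 + 1) b ⬙ (C.id b ⊠ γ 1 1)) := Enat hC (γ 1 1) (C.id b)
    _ ≃' (γ 2 b ⬙ (C.id b ⊠ γ 1 1)) := Ecr hC (Egamma_congr hC (by omega) rfl)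

theorem Eswap2 (c : ℕ) :
    E ((C.id c ⊠ γ 1 1) ⬙ (C.id c ⊠ γ 1 1)) (C.id (c + 2)) := by
  calc ((C.id c ⊠ γ 1 1) ⬙ (C.id c ⊠ γ 1 1))
      ≃' (C.id c ⊠ (γ 1 1 ⬙ γ 1 1)) := (ETL hC c _ _ (by omega)).symm
    _ ≃' (C.id c ⊠ C.id 2) := E.tensor E.rfl ((Esymm hC 1 1).trans (Eid (by omega)))
    _ ≃' (C.id (c + 2)) := E.of_eq (hC.tensor_id c 2)

theorem EPcore (b : ℕ) :
    E (γ 1 (b + 1) ⬙ γ 1 (b + 1)) ((C.id 1 ⊠ γ 1 b) ⬙ (γ 1 b ⊠ C.id 1)) := by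
  calc (γ 1 (b + 1) ⬙ γ 1 (b + 1))
      ≃' (((γ 1 1 ⊠ C.id b) ⬙ (C.id 1 ⊠ γ 1 b)) ⬙
        ((γ 1 b ⊠ C.id 1) ⬙ (C.id b ⊠ γ 1 1))) :=
      E.hcp ((Egamma_congr hC rfl (by omega : b + 1 = 1 + b)).trans
        (Eg1split hC 1 b)) (Eg1split hC b 1)
    _ ≃' ((γ 1 1 ⊠ C.id b) ⬙ ((C.id 1 ⊠ γ 1 b) ⬙
        ((γ 1 b ⊠ C.id 1) ⬙ (C.id b ⊠ γ 1 1)))) := EA hC (by omega) (by omega) _ _ _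
    _ ≃' ((γ 1 1 ⊠ C.id b) ⬙ (((C.id 1 ⊠ γ 1 b) ⬙
        (γ 1 b ⊠ C.id 1)) ⬙ (C.id b ⊠ γ 1 1))) :=
      Ecl hC (EA hC (by omega) (by omega) _ _ _).symm
    _ ≃' ((γ 1 1 ⊠ C.id b) ⬙ (γ 2 b ⬙ (C.id b ⊠ γ 1 1))) := Ecl hC (Ecr hC (Ehex11 hC b))
    _ ≃' (((γ 1 1 ⊠ C.id b) ⬙ γ 2 b) ⬙ (C.id b ⊠ γ 1 1)) :=
      (EA hC (by omega) (by omega) _ _ _).symm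
    _ ≃' ((γ 2 b ⬙ (C.id b ⊠ γ 1 1)) ⬙ (C.id b ⊠ γ 1 1)) := Ecr hC (Enat2b hC b)
    _ ≃' (γ 2 b ⬙ ((C.id b ⊠ γ 1 1) ⬙ (C.id b ⊠ γ 1 1))) :=
      EA hC (by omega) (by omega) _ _ _
    _ ≃' (γ 2 b ⬙ C.id (b + 2)) := Ecl hC (Eswap2 hC b)
    _ ≃' (γ 2 b) := Ehcp_id_right hC _ (by omega)
    _ ≃' ((C.id 1 ⊠ γ 1 b) ⬙ (γ 1 b ⊠ C.id 1)) := (Ehex11 hC b).symm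

end Dev

section DevP
variable {C : MonCatN} {γ : ∀ m n : ℕ, C.Hom (m + n) (n + m)}
variable (P : PoalgebraIn C γ)

/-- copy wire `i` and route the copy to the end, past `k` wires -/
def Fc (i k : ℕ) : C.Hom (i + 1 + k) (i + 1 + (k + 1)) :=
  ((C.id i ⊠ P.δ) ⊠ C.id k) ⬙ (C.id (i + 1) ⊠ γ 1 k)

variable (hC : IsStrictSymMon C γ)
include hC

theorem Emu_comm : E (γ 1 1 ⬙ P.μ) P.μ :=
  (E.hcp_comp _ _ (by omega)).trans (E.of_eq P.mul_comm)

theorem Ecocomm : E (P.δ ⬙ γ 1 1) P.δ :=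
  (E.hcp_comp _ _ (by omega)).trans (E.of_eq P.comul_cocomm)

theorem Ecoassoc : E (P.δ ⬙ (P.δ ⊠ C.id 1)) (P.δ ⬙ (C.id 1 ⊠ P.δ)) :=
  ((E.hcp_comp _ _ (by omega)).trans (E.of_eq P.comul_coassoc)).trans
    (E.hcp_comp _ _ (by omega)).symm

theorem EGN {b b' : ℕ} (g : C.Hom b b') (i k : ℕ) :
    E ((C.id (i + 1 + k) ⊠ g) ⬙ Fc P i (k + b'))
      (Fc P i (k + b) ⬙ ((C.id (i + 1 + k) ⊠ g) ⊠ C.id 1)) := by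
  have step2 : E ((C.id (i + 1 + k) ⊠ g) ⬙ ((C.id i ⊠ P.δ) ⊠ C.id (k + b')))
      (((C.id i ⊠ P.δ) ⊠ C.id (k + b)) ⬙ (C.id (i + 2 + k) ⊠ g)) := by
    calc ((C.id (i + 1 + k) ⊠ g) ⬙ ((C.id i ⊠ P.δ) ⊠ C.id (k + b')))
        ≃' ((C.id (i + 1 + k) ⊠ g) ⬙ (((C.id i ⊠ P.δ) ⊠ C.id k) ⊠ C.id b')) :=
          Ecl hC (Egr2 hC k b' _).symm
      _ ≃' ((C.id (i + 1 + k) ⬙ ((C.id i ⊠ P.δ) ⊠ C.id k)) ⊠ (g ⬙ C.id b')) :=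
          Einter hC _ _ _ _ rfl rfl (by omega)
      _ ≃' (((C.id i ⊠ P.δ) ⊠ C.id k) ⊠ g) :=
          E.tensor (Ehcp_id_left hC _ rfl) (Ehcp_id_right hC _ rfl)
      _ ≃' ((((C.id i ⊠ P.δ) ⊠ C.id k) ⬙ C.id (i + 2 + k)) ⊠ (C.id b ⬙ g)) :=
          (E.tensor (Ehcp_id_right hC _ (by omega)) (Ehcp_id_left hC _ rfl)).symm
      _ ≃' ((((C.id i ⊠ P.δ) ⊠ C.id k) ⊠ C.id b) ⬙ (C.id (i + 2 + k) ⊠ g)) :=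
          (Einter hC _ _ _ _ (by omega) rfl (by omega)).symm
      _ ≃' (((C.id i ⊠ P.δ) ⊠ C.id (k + b)) ⬙ (C.id (i + 2 + k) ⊠ g)) :=
          Ecr hC (Egr2 hC k b _)
  have inner2 : E ((C.id (k + 1) ⊠ g) ⬙ (C.id k ⊠ γ 1 b'))
      ((C.id k ⊠ γ 1 b) ⬙ (C.id k ⊠ (g ⊠ C.id 1))) := by
    calc ((C.id (k + 1) ⊠ g) ⬙ (C.id k ⊠ γ 1 b'))
        ≃' ((C.id k ⊠ (C.id 1 ⊠ g)) ⬙ (C.id k ⊠ γ 1 b')) :=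
          Ecr hC ((E.tensor (Eid (by omega : k + 1 = k + 1)) E.rfl).trans
            (Egr1 hC k 1 g).symm)
      _ ≃' (C.id k ⊠ ((C.id 1 ⊠ g) ⬙ γ 1 b')) := (ETL hC k _ _ (by omega)).symm
      _ ≃' (C.id k ⊠ (γ 1 b ⬙ (g ⊠ C.id 1))) :=
          E.tensor E.rfl (Enat hC (C.id 1) g)
      _ ≃' ((C.id k ⊠ γ 1 b) ⬙ (C.id k ⊠ (g ⊠ C.id 1))) := ETL hC k _ _ (by omega)
  have innerUV : E ((C.id (1 + k) ⊠ g) ⬙ γ 1 (k + b'))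
      (γ 1 (k + b) ⬙ (C.id k ⊠ (g ⊠ C.id 1))) := by
    calc ((C.id (1 + k) ⊠ g) ⬙ γ 1 (k + b'))
        ≃' ((C.id (1 + k) ⊠ g) ⬙ ((γ 1 k ⊠ C.id b') ⬙ (C.id k ⊠ γ 1 b'))) :=
          Ecl hC (Eg1split hC k b')
      _ ≃' (((C.id (1 + k) ⊠ g) ⬙ (γ 1 k ⊠ C.id b')) ⬙ (C.id k ⊠ γ 1 b')) :=
          (EA hC (by omega) (by omega) _ _ _).symm
      _ ≃' (((C.id (1 + k) ⬙ γ 1 k) ⊠ (g ⬙ C.id b')) ⬙ (C.id k ⊠ γ 1 b')) :=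
          Ecr hC (Einter hC _ _ _ _ rfl rfl (by omega))
      _ ≃' ((γ 1 k ⊠ g) ⬙ (C.id k ⊠ γ 1 b')) :=
          Ecr hC (E.tensor (Ehcp_id_left hC _ rfl) (Ehcp_id_right hC _ rfl))
      _ ≃' (((γ 1 k ⬙ C.id (k + 1)) ⊠ (C.id b ⬙ g)) ⬙ (C.id k ⊠ γ 1 b')) :=
          Ecr hC (E.tensor (Ehcp_id_right hC _ rfl) (Ehcp_id_left hC _ rfl)).symm
      _ ≃' (((γ 1 k ⊠ C.id b) ⬙ (C.id (k + 1) ⊠ g)) ⬙ (C.id k ⊠ γ 1 b')) :=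
          Ecr hC (Einter hC _ _ _ _ rfl rfl (by omega)).symm
      _ ≃' ((γ 1 k ⊠ C.id b) ⬙ ((C.id (k + 1) ⊠ g) ⬙ (C.id k ⊠ γ 1 b'))) :=
          EA hC (by omega) (by omega) _ _ _
      _ ≃' ((γ 1 k ⊠ C.id b) ⬙ ((C.id k ⊠ γ 1 b) ⬙ (C.id k ⊠ (g ⊠ C.id 1)))) :=
          Ecl hC (inner2)
      _ ≃' (((γ 1 k ⊠ C.id b) ⬙ (C.id k ⊠ γ 1 b)) ⬙ (C.id k ⊠ (g ⊠ C.id 1))) :=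
          (EA hC (by omega) (by omega) _ _ _).symm
      _ ≃' (γ 1 (k + b) ⬙ (C.id k ⊠ (g ⊠ C.id 1))) :=
          Ecr hC (Eg1split hC k b).symm
  calc ((C.id (i + 1 + k) ⊠ g) ⬙ Fc P i (k + b'))
      ≃' (((C.id (i + 1 + k) ⊠ g) ⬙ ((C.id i ⊠ P.δ) ⊠ C.id (k + b'))) ⬙
        (C.id (i + 1) ⊠ γ 1 (k + b'))) := (EA hC (by omega) (by omega) _ _ _).symm
    _ ≃' ((((C.id i ⊠ P.δ) ⊠ C.id (k + b)) ⬙ (C.id (i + 2 + k) ⊠ g)) ⬙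
        (C.id (i + 1) ⊠ γ 1 (k + b'))) := Ecr hC step2
    _ ≃' (((C.id i ⊠ P.δ) ⊠ C.id (k + b)) ⬙ ((C.id (i + 2 + k) ⊠ g) ⬙
        (C.id (i + 1) ⊠ γ 1 (k + b')))) := EA hC (by omega) (by omega) _ _ _
    _ ≃' (((C.id i ⊠ P.δ) ⊠ C.id (k + b)) ⬙ ((C.id (i + 1) ⊠ (C.id (1 + k) ⊠ g)) ⬙
        (C.id (i + 1) ⊠ γ 1 (k + b')))) :=
        Ecl hC (Ecr hC ((E.tensor (Eid (by omega : i + 2 + k = (i + 1) + (1 + k)))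
          E.rfl).trans (Egr1 hC (i + 1) (1 + k) g).symm))
    _ ≃' (((C.id i ⊠ P.δ) ⊠ C.id (k + b)) ⬙
        (C.id (i + 1) ⊠ ((C.id (1 + k) ⊠ g) ⬙ γ 1 (k + b')))) :=
        Ecl hC (ETL hC (i + 1) _ _ (by omega)).symm
    _ ≃' (((C.id i ⊠ P.δ) ⊠ C.id (k + b)) ⬙
        (C.id (i + 1) ⊠ (γ 1 (k + b) ⬙ (C.id k ⊠ (g ⊠ C.id 1))))) :=
        Ecl hC (E.tensor E.rfl innerUV)
    _ ≃' (((C.id i ⊠ P.δ) ⊠ C.id (k + b)) ⬙ ((C.id (i + 1) ⊠ γ 1 (k + b)) ⬙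
        (C.id (i + 1) ⊠ (C.id k ⊠ (g ⊠ C.id 1))))) :=
        Ecl hC (ETL hC (i + 1) _ _ (by omega))
    _ ≃' ((((C.id i ⊠ P.δ) ⊠ C.id (k + b)) ⬙ (C.id (i + 1) ⊠ γ 1 (k + b))) ⬙
        (C.id (i + 1) ⊠ (C.id k ⊠ (g ⊠ C.id 1)))) :=
        (EA hC (by omega) (by omega) _ _ _).symm
    _ ≃' (Fc P i (k + b) ⬙ ((C.id (i + 1 + k) ⊠ g) ⊠ C.id 1)) :=
        Ecl hC ((Egr1 hC (i + 1) k _).trans (Etensor_assoc hC _ _ _).symm)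

theorem EF3 (i k : ℕ) :
    E (Fc P i (k + 1)) ((Fc P i k ⊠ C.id 1) ⬙ (C.id (i + 1 + k) ⊠ γ 1 1)) := by
  calc Fc P i (k + 1)
      ≃' (((C.id i ⊠ P.δ) ⊠ C.id (k + 1)) ⬙
        ((C.id (i + 1) ⊠ (γ 1 k ⊠ C.id 1)) ⬙ (C.id (i + 1) ⊠ (C.id k ⊠ γ 1 1)))) :=
      Ecl hC ((E.tensor E.rfl (Eg1split hC k 1)).trans (ETL hC (i + 1) _ _ (by omega)))
    _ ≃' ((((C.id i ⊠ P.δ) ⊠ C.id (k + 1)) ⬙ (C.id (i + 1) ⊠ (γ 1 k ⊠ C.id 1))) ⬙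
        (C.id (i + 1) ⊠ (C.id k ⊠ γ 1 1))) := (EA hC (by omega) (by omega) _ _ _).symm
    _ ≃' (((((C.id i ⊠ P.δ) ⊠ C.id k) ⊠ C.id 1) ⬙ ((C.id (i + 1) ⊠ γ 1 k) ⊠ C.id 1)) ⬙
        (C.id (i + 1) ⊠ (C.id k ⊠ γ 1 1))) :=
      Ecr hC (E.hcp (Egr2 hC k 1 _).symm (Etensor_assoc hC _ _ _).symm)
    _ ≃' ((Fc P i k ⊠ C.id 1) ⬙ (C.id (i + 1) ⊠ (C.id k ⊠ γ 1 1))) :=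
      Ecr hC (ETR hC 1 _ _ (by omega)).symm
    _ ≃' ((Fc P i k ⊠ C.id 1) ⬙ (C.id (i + 1 + k) ⊠ γ 1 1)) :=
      Ecl hC (Egr1 hC (i + 1) k _)

theorem EF2lt (i d b : ℕ) :
    E (Fc P (i + 1 + d) b ⬙ (Fc P i (d + 1 + b) ⊠ C.id 1))
      (Fc P i (d + 1 + b) ⬙ Fc P (i + 1 + d) (b + 1)) := by
  -- naming: j = i+1+d, a = d+1+b, context c = i+1+a = j+1+b
  -- glue facts
  have gΔj : E ((C.id (i + 1 + d) ⊠ P.δ) ⊠ C.id b)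
      (C.id (i + 1) ⊠ ((C.id d ⊠ P.δ) ⊠ C.id b)) :=
    (E.tensor (Egr1 hC (i + 1) d P.δ).symm E.rfl).trans (Etensor_assoc hC _ _ _)
  have gΔjp : E ((C.id (i + 1 + d) ⊠ P.δ) ⊠ C.id (b + 1))
      (C.id (i + 1) ⊠ (((C.id d ⊠ P.δ) ⊠ C.id b) ⊠ C.id 1)) := by
    calc ((C.id (i + 1 + d) ⊠ P.δ) ⊠ C.id (b + 1))
        ≃' (C.id (i + 1) ⊠ ((C.id d ⊠ P.δ) ⊠ C.id (b + 1))) :=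
        (E.tensor (Egr1 hC (i + 1) d P.δ).symm E.rfl).trans (Etensor_assoc hC _ _ _)
      _ ≃' (C.id (i + 1) ⊠ (((C.id d ⊠ P.δ) ⊠ C.id b) ⊠ C.id 1)) :=
        E.tensor E.rfl (Egr2 hC b 1 _).symm
  have gΔj1 : E (C.id (i + 2) ⊠ ((C.id d ⊠ P.δ) ⊠ C.id b))
      ((C.id (i + 1 + d + 1) ⊠ P.δ) ⊠ C.id b) :=
    ((Etensor_assoc hC _ _ _).symm).trans
      (E.tensor ((Egr1 hC (i + 2) d P.δ).trans
        (E.tensor (Eid (by omega)) E.rfl)) E.rfl)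
  have gCj : E (C.id (i + 1 + d + 1) ⊠ γ 1 b)
      (C.id (i + 1) ⊠ (C.id (d + 1) ⊠ γ 1 b)) :=
    (E.tensor (Eid (by omega : i + 1 + d + 1 = (i + 1) + (d + 1))) E.rfl).trans
      (Egr1 hC (i + 1) (d + 1) (γ 1 b)).symm
  have gCj2 : E (C.id (i + 2) ⊠ (C.id (d + 1) ⊠ γ 1 b))
      (C.id (i + 1 + d + 2) ⊠ γ 1 b) :=
    (Egr1 hC (i + 2) (d + 1) (γ 1 b)).trans (E.tensor (Eid (by omega)) E.rfl)
  -- h1 : commute C_j with the second copy morphism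
  have h1 : E ((C.id (i + 1 + d + 1) ⊠ γ 1 b) ⬙ ((C.id i ⊠ P.δ) ⊠ C.id (d + 1 + b + 1)))
      (((C.id i ⊠ P.δ) ⊠ C.id (d + 1 + b + 1)) ⬙ (C.id (i + 1 + d + 2) ⊠ γ 1 b)) := by
    calc ((C.id (i + 1 + d + 1) ⊠ γ 1 b) ⬙ ((C.id i ⊠ P.δ) ⊠ C.id (d + 1 + b + 1)))
        ≃' ((C.id (i + 1) ⊠ (C.id (d + 1) ⊠ γ 1 b)) ⬙
          ((C.id i ⊠ P.δ) ⊠ C.id (d + 1 + b + 1))) := Ecr hC gCj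
      _ ≃' ((C.id (i + 1) ⬙ (C.id i ⊠ P.δ)) ⊠
          ((C.id (d + 1) ⊠ γ 1 b) ⬙ C.id (d + 1 + b + 1))) :=
        Einter hC _ _ _ _ rfl (by omega) (by omega)
      _ ≃' ((C.id i ⊠ P.δ) ⊠ (C.id (d + 1) ⊠ γ 1 b)) :=
        E.tensor (Ehcp_id_left hC _ rfl) (Ehcp_id_right hC _ (by omega))
      _ ≃' (((C.id i ⊠ P.δ) ⊠ C.id (d + 1 + (1 + b))) ⬙
          (C.id (i + 2) ⊠ (C.id (d + 1) ⊠ γ 1 b))) :=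
        Esplit1 hC (C.tensor (C.id i) P.δ) (C.tensor (C.id (d + 1)) (γ 1 b))
      _ ≃' (((C.id i ⊠ P.δ) ⊠ C.id (d + 1 + b + 1)) ⬙ (C.id (i + 1 + d + 2) ⊠ γ 1 b)) :=
        E.hcp (E.tensor E.rfl (Eid (by omega))) gCj2
  -- h2 : commute the two copy morphisms
  have h2 : E (((C.id (i + 1 + d) ⊠ P.δ) ⊠ C.id b) ⬙
      ((C.id i ⊠ P.δ) ⊠ C.id (d + 1 + b + 1)))
      ((((C.id i ⊠ P.δ) ⊠ C.id (d + 1 + b))) ⬙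
        ((C.id (i + 1 + d + 1) ⊠ P.δ) ⊠ C.id b)) := by
    calc (((C.id (i + 1 + d) ⊠ P.δ) ⊠ C.id b) ⬙
        ((C.id i ⊠ P.δ) ⊠ C.id (d + 1 + b + 1)))
        ≃' ((C.id (i + 1) ⊠ ((C.id d ⊠ P.δ) ⊠ C.id b)) ⬙
          ((C.id i ⊠ P.δ) ⊠ C.id (d + 1 + b + 1))) := Ecr hC gΔj
      _ ≃' ((C.id (i + 1) ⬙ (C.id i ⊠ P.δ)) ⊠
          (((C.id d ⊠ P.δ) ⊠ C.id b) ⬙ C.id (d + 1 + b + 1))) :=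
        Einter hC _ _ _ _ rfl (by omega) (by omega)
      _ ≃' ((C.id i ⊠ P.δ) ⊠ ((C.id d ⊠ P.δ) ⊠ C.id b)) :=
        E.tensor (Ehcp_id_left hC _ rfl) (Ehcp_id_right hC _ (by omega))
      _ ≃' (((C.id i ⊠ P.δ) ⊠ C.id (d + 1 + b)) ⬙
          (C.id (i + 2) ⊠ ((C.id d ⊠ P.δ) ⊠ C.id b))) :=
        Esplit1 hC (C.tensor (C.id i) P.δ) _
      _ ≃' (((C.id i ⊠ P.δ) ⊠ C.id (d + 1 + b)) ⬙
          ((C.id (i + 1 + d + 1) ⊠ P.δ) ⊠ C.id b)) := Ecl hC gΔj1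
  -- h3 : commute C_i with the (wide) copy of wire j
  have h3 : E ((C.id (i + 1) ⊠ γ 1 (d + 1 + b)) ⬙
      ((C.id (i + 1 + d) ⊠ P.δ) ⊠ C.id (b + 1)))
      (((C.id (i + 1 + d + 1) ⊠ P.δ) ⊠ C.id b) ⬙
        (C.id (i + 1) ⊠ γ 1 (d + 1 + b + 1))) := by
    have inner : E (γ 1 (d + 1 + b) ⬙ (((C.id d ⊠ P.δ) ⊠ C.id b) ⊠ C.id 1))
        ((C.id 1 ⊠ ((C.id d ⊠ P.δ) ⊠ C.id b)) ⬙ γ 1 (d + 1 + b + 1)) := by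
      refine E.trans (Enat hC (C.id 1) ((C.id d ⊠ P.δ) ⊠ C.id b)).symm ?_
      exact Ecl hC (Egamma_congr hC rfl (by omega))
    have g1 : E (C.id (i + 1) ⊠ (C.id 1 ⊠ ((C.id d ⊠ P.δ) ⊠ C.id b)))
        ((C.id (i + 1 + d + 1) ⊠ P.δ) ⊠ C.id b) :=
      ((Egr1 hC (i + 1) 1 _).trans (E.tensor (Eid (by omega)) E.rfl)).trans gΔj1
    calc ((C.id (i + 1) ⊠ γ 1 (d + 1 + b)) ⬙
        ((C.id (i + 1 + d) ⊠ P.δ) ⊠ C.id (b + 1)))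
        ≃' ((C.id (i + 1) ⊠ γ 1 (d + 1 + b)) ⬙
          (C.id (i + 1) ⊠ (((C.id d ⊠ P.δ) ⊠ C.id b) ⊠ C.id 1))) := Ecl hC gΔjp
      _ ≃' (C.id (i + 1) ⊠ (γ 1 (d + 1 + b) ⬙ (((C.id d ⊠ P.δ) ⊠ C.id b) ⊠ C.id 1))) :=
        (ETL hC (i + 1) _ _ (by omega)).symm
      _ ≃' (C.id (i + 1) ⊠ ((C.id 1 ⊠ ((C.id d ⊠ P.δ) ⊠ C.id b)) ⬙
          γ 1 (d + 1 + b + 1))) := E.tensor E.rfl inner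
      _ ≃' ((C.id (i + 1) ⊠ (C.id 1 ⊠ ((C.id d ⊠ P.δ) ⊠ C.id b))) ⬙
          (C.id (i + 1) ⊠ γ 1 (d + 1 + b + 1))) := ETL hC (i + 1) _ _ (by omega)
      _ ≃' (((C.id (i + 1 + d + 1) ⊠ P.δ) ⊠ C.id b) ⬙
          (C.id (i + 1) ⊠ γ 1 (d + 1 + b + 1))) := Ecr hC g1
  -- h4 : the permutation identity
  have hCiw : E (C.id (i + 1) ⊠ γ 1 (d + 1 + b + 1))
      (((C.id (i + 1) ⊠ γ 1 (d + 1)) ⊠ C.id (b + 1)) ⬙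
        (C.id (i + 1 + d + 1) ⊠ γ 1 (b + 1))) := by
    calc (C.id (i + 1) ⊠ γ 1 (d + 1 + b + 1))
        ≃' (C.id (i + 1) ⊠ ((γ 1 (d + 1) ⊠ C.id (b + 1)) ⬙
          (C.id (d + 1) ⊠ γ 1 (b + 1)))) :=
        E.tensor E.rfl ((Egamma_congr hC rfl (by omega)).trans
          (Eg1split hC (d + 1) (b + 1)))
      _ ≃' ((C.id (i + 1) ⊠ (γ 1 (d + 1) ⊠ C.id (b + 1))) ⬙
          (C.id (i + 1) ⊠ (C.id (d + 1) ⊠ γ 1 (b + 1)))) := ETL hC (i + 1) _ _ (by omega)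
      _ ≃' (((C.id (i + 1) ⊠ γ 1 (d + 1)) ⊠ C.id (b + 1)) ⬙
          (C.id (i + 1 + d + 1) ⊠ γ 1 (b + 1))) :=
        E.hcp (Etensor_assoc hC _ _ _).symm
          ((Egr1 hC (i + 1) (d + 1) _).trans (E.tensor (Eid (by omega)) E.rfl))
  have hCi : E (C.id (i + 1) ⊠ γ 1 (d + 1 + b))
      (((C.id (i + 1) ⊠ γ 1 (d + 1)) ⊠ C.id b) ⬙ (C.id (i + 1 + d + 1) ⊠ γ 1 b)) := by
    calc (C.id (i + 1) ⊠ γ 1 (d + 1 + b))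
        ≃' (C.id (i + 1) ⊠ ((γ 1 (d + 1) ⊠ C.id b) ⬙ (C.id (d + 1) ⊠ γ 1 b))) :=
        E.tensor E.rfl (Eg1split hC (d + 1) b)
      _ ≃' ((C.id (i + 1) ⊠ (γ 1 (d + 1) ⊠ C.id b)) ⬙
          (C.id (i + 1) ⊠ (C.id (d + 1) ⊠ γ 1 b))) := ETL hC (i + 1) _ _ (by omega)
      _ ≃' (((C.id (i + 1) ⊠ γ 1 (d + 1)) ⊠ C.id b) ⬙ (C.id (i + 1 + d + 1) ⊠ γ 1 b)) :=
        E.hcp (Etensor_assoc hC _ _ _).symm gCj.symm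
  have hCi1 : E ((C.id (i + 1) ⊠ γ 1 (d + 1 + b)) ⊠ C.id 1)
      (((C.id (i + 1) ⊠ γ 1 (d + 1)) ⊠ C.id (b + 1)) ⬙
        ((C.id (i + 1 + d + 1) ⊠ γ 1 b) ⊠ C.id 1)) := by
    calc ((C.id (i + 1) ⊠ γ 1 (d + 1 + b)) ⊠ C.id 1)
        ≃' ((((C.id (i + 1) ⊠ γ 1 (d + 1)) ⊠ C.id b) ⬙
          (C.id (i + 1 + d + 1) ⊠ γ 1 b)) ⊠ C.id 1) := E.tensor hCi E.rfl
      _ ≃' ((((C.id (i + 1) ⊠ γ 1 (d + 1)) ⊠ C.id b) ⊠ C.id 1) ⬙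
          ((C.id (i + 1 + d + 1) ⊠ γ 1 b) ⊠ C.id 1)) := ETR hC 1 _ _ (by omega)
      _ ≃' (((C.id (i + 1) ⊠ γ 1 (d + 1)) ⊠ C.id (b + 1)) ⬙
          ((C.id (i + 1 + d + 1) ⊠ γ 1 b) ⊠ C.id 1)) := Ecr hC (Egr2 hC b 1 _)
  have hcomm : E ((C.id (i + 1 + d + 2) ⊠ γ 1 b) ⬙
      ((C.id (i + 1) ⊠ γ 1 (d + 1)) ⊠ C.id (b + 1)))
      (((C.id (i + 1) ⊠ γ 1 (d + 1)) ⊠ C.id (1 + b)) ⬙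
        (C.id (i + 1 + d + 2) ⊠ γ 1 b)) := by
    calc ((C.id (i + 1 + d + 2) ⊠ γ 1 b) ⬙
        ((C.id (i + 1) ⊠ γ 1 (d + 1)) ⊠ C.id (b + 1)))
        ≃' ((C.id (i + 1 + (1 + (d + 1))) ⊠ γ 1 b) ⬙
          ((C.id (i + 1) ⊠ γ 1 (d + 1)) ⊠ C.id (b + 1))) :=
        Ecr hC (E.tensor (Eid (by omega)) E.rfl)
      _ ≃' (((C.id (i + 1) ⊠ γ 1 (d + 1)) ⊠ C.id (1 + b)) ⬙
          (C.id (i + 1 + ((d + 1) + 1)) ⊠ γ 1 b)) :=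
        (Edisj hC (C.tensor (C.id (i + 1)) (γ 1 (d + 1))) (γ 1 b)).symm
      _ ≃' (((C.id (i + 1) ⊠ γ 1 (d + 1)) ⊠ C.id (1 + b)) ⬙
          (C.id (i + 1 + d + 2) ⊠ γ 1 b)) := Ecl hC (E.tensor (Eid (by omega)) E.rfl)
  have hPP : E ((C.id (i + 1 + d + 2) ⊠ γ 1 b) ⬙
      ((C.id (i + 1 + d + 1) ⊠ γ 1 b) ⊠ C.id 1))
      ((C.id (i + 1 + d + 1) ⊠ γ 1 (b + 1)) ⬙ (C.id (i + 1 + d + 1) ⊠ γ 1 (b + 1))) := by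
    calc ((C.id (i + 1 + d + 2) ⊠ γ 1 b) ⬙
        ((C.id (i + 1 + d + 1) ⊠ γ 1 b) ⊠ C.id 1))
        ≃' ((C.id (i + 1 + d + 1) ⊠ (C.id 1 ⊠ γ 1 b)) ⬙
          (C.id (i + 1 + d + 1) ⊠ (γ 1 b ⊠ C.id 1))) :=
        E.hcp ((E.tensor (Eid (by omega : i + 1 + d + 2 = (i + 1 + d + 1) + 1))
          E.rfl).trans (Egr1 hC (i + 1 + d + 1) 1 (γ 1 b)).symm)
          (Etensor_assoc hC _ _ _)
      _ ≃' (C.id (i + 1 + d + 1) ⊠ ((C.id 1 ⊠ γ 1 b) ⬙ (γ 1 b ⊠ C.id 1))) :=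
        (ETL hC (i + 1 + d + 1) _ _ (by omega)).symm
      _ ≃' (C.id (i + 1 + d + 1) ⊠ (γ 1 (b + 1) ⬙ γ 1 (b + 1))) :=
        E.tensor E.rfl (EPcore hC b).symm
      _ ≃' ((C.id (i + 1 + d + 1) ⊠ γ 1 (b + 1)) ⬙
          (C.id (i + 1 + d + 1) ⊠ γ 1 (b + 1))) := ETL hC (i + 1 + d + 1) _ _ (by omega)
  have h4 : E ((C.id (i + 1 + d + 2) ⊠ γ 1 b) ⬙
      ((C.id (i + 1) ⊠ γ 1 (d + 1 + b)) ⊠ C.id 1))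
      ((C.id (i + 1) ⊠ γ 1 (d + 1 + b + 1)) ⬙
        (C.id (i + 1 + d + 1) ⊠ γ 1 (b + 1))) := by
    calc ((C.id (i + 1 + d + 2) ⊠ γ 1 b) ⬙
        ((C.id (i + 1) ⊠ γ 1 (d + 1 + b)) ⊠ C.id 1))
        ≃' ((C.id (i + 1 + d + 2) ⊠ γ 1 b) ⬙
          ((((C.id (i + 1) ⊠ γ 1 (d + 1)) ⊠ C.id (b + 1))) ⬙
            ((C.id (i + 1 + d + 1) ⊠ γ 1 b) ⊠ C.id 1))) := Ecl hC hCi1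
      _ ≃' (((C.id (i + 1 + d + 2) ⊠ γ 1 b) ⬙
          ((C.id (i + 1) ⊠ γ 1 (d + 1)) ⊠ C.id (b + 1))) ⬙
            ((C.id (i + 1 + d + 1) ⊠ γ 1 b) ⊠ C.id 1)) :=
        (EA hC (by omega) (by omega) _ _ _).symm
      _ ≃' ((((C.id (i + 1) ⊠ γ 1 (d + 1)) ⊠ C.id (1 + b)) ⬙
          (C.id (i + 1 + d + 2) ⊠ γ 1 b)) ⬙
            ((C.id (i + 1 + d + 1) ⊠ γ 1 b) ⊠ C.id 1)) := Ecr hC hcomm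
      _ ≃' (((C.id (i + 1) ⊠ γ 1 (d + 1)) ⊠ C.id (1 + b)) ⬙
          ((C.id (i + 1 + d + 2) ⊠ γ 1 b) ⬙
            ((C.id (i + 1 + d + 1) ⊠ γ 1 b) ⊠ C.id 1))) :=
        EA hC (by omega) (by omega) _ _ _
      _ ≃' (((C.id (i + 1) ⊠ γ 1 (d + 1)) ⊠ C.id (1 + b)) ⬙
          ((C.id (i + 1 + d + 1) ⊠ γ 1 (b + 1)) ⬙
            (C.id (i + 1 + d + 1) ⊠ γ 1 (b + 1)))) := Ecl hC hPP
      _ ≃' ((((C.id (i + 1) ⊠ γ 1 (d + 1)) ⊠ C.id (1 + b)) ⬙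
          (C.id (i + 1 + d + 1) ⊠ γ 1 (b + 1))) ⬙
            (C.id (i + 1 + d + 1) ⊠ γ 1 (b + 1))) :=
        (EA hC (by omega) (by omega) _ _ _).symm
      _ ≃' ((((C.id (i + 1) ⊠ γ 1 (d + 1)) ⊠ C.id (b + 1)) ⬙
          (C.id (i + 1 + d + 1) ⊠ γ 1 (b + 1))) ⬙
            (C.id (i + 1 + d + 1) ⊠ γ 1 (b + 1))) :=
        Ecr hC (Ecr hC (E.tensor E.rfl (Eid (by omega))))
      _ ≃' ((C.id (i + 1) ⊠ γ 1 (d + 1 + b + 1)) ⬙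
          (C.id (i + 1 + d + 1) ⊠ γ 1 (b + 1))) := Ecr hC hCiw.symm
  -- final assembly
  calc (Fc P (i + 1 + d) b ⬙ (Fc P i (d + 1 + b) ⊠ C.id 1))
      ≃' ((((C.id (i + 1 + d) ⊠ P.δ) ⊠ C.id b) ⬙ (C.id (i + 1 + d + 1) ⊠ γ 1 b)) ⬙
        ((((C.id i ⊠ P.δ) ⊠ C.id (d + 1 + b)) ⊠ C.id 1) ⬙
          ((C.id (i + 1) ⊠ γ 1 (d + 1 + b)) ⊠ C.id 1))) :=
      Ecl hC (ETR hC 1 _ _ (by omega))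
    _ ≃' ((((C.id (i + 1 + d) ⊠ P.δ) ⊠ C.id b) ⬙ (C.id (i + 1 + d + 1) ⊠ γ 1 b)) ⬙
        (((C.id i ⊠ P.δ) ⊠ C.id (d + 1 + b + 1)) ⬙
          ((C.id (i + 1) ⊠ γ 1 (d + 1 + b)) ⊠ C.id 1))) :=
      Ecl hC (Ecr hC (Egr2 hC (d + 1 + b) 1 _))
    _ ≃' (((C.id (i + 1 + d) ⊠ P.δ) ⊠ C.id b) ⬙ ((C.id (i + 1 + d + 1) ⊠ γ 1 b) ⬙
        (((C.id i ⊠ P.δ) ⊠ C.id (d + 1 + b + 1)) ⬙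
          ((C.id (i + 1) ⊠ γ 1 (d + 1 + b)) ⊠ C.id 1)))) :=
      EA hC (by omega) (by omega) _ _ _
    _ ≃' (((C.id (i + 1 + d) ⊠ P.δ) ⊠ C.id b) ⬙ (((C.id (i + 1 + d + 1) ⊠ γ 1 b) ⬙
        ((C.id i ⊠ P.δ) ⊠ C.id (d + 1 + b + 1))) ⬙
          ((C.id (i + 1) ⊠ γ 1 (d + 1 + b)) ⊠ C.id 1))) :=
      Ecl hC (EA hC (by omega) (by omega) _ _ _).symm
    _ ≃' (((C.id (i + 1 + d) ⊠ P.δ) ⊠ C.id b) ⬙ ((((C.id i ⊠ P.δ) ⊠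
        C.id (d + 1 + b + 1)) ⬙ (C.id (i + 1 + d + 2) ⊠ γ 1 b)) ⬙
          ((C.id (i + 1) ⊠ γ 1 (d + 1 + b)) ⊠ C.id 1))) := Ecl hC (Ecr hC h1)
    _ ≃' (((C.id (i + 1 + d) ⊠ P.δ) ⊠ C.id b) ⬙ (((C.id i ⊠ P.δ) ⊠
        C.id (d + 1 + b + 1)) ⬙ ((C.id (i + 1 + d + 2) ⊠ γ 1 b) ⬙
          ((C.id (i + 1) ⊠ γ 1 (d + 1 + b)) ⊠ C.id 1)))) :=
      Ecl hC (EA hC (by omega) (by omega) _ _ _)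
    _ ≃' (((C.id (i + 1 + d) ⊠ P.δ) ⊠ C.id b) ⬙ (((C.id i ⊠ P.δ) ⊠
        C.id (d + 1 + b + 1)) ⬙ ((C.id (i + 1) ⊠ γ 1 (d + 1 + b + 1)) ⬙
          (C.id (i + 1 + d + 1) ⊠ γ 1 (b + 1))))) := Ecl hC (Ecl hC h4)
    _ ≃' ((((C.id (i + 1 + d) ⊠ P.δ) ⊠ C.id b) ⬙ ((C.id i ⊠ P.δ) ⊠
        C.id (d + 1 + b + 1))) ⬙ ((C.id (i + 1) ⊠ γ 1 (d + 1 + b + 1)) ⬙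
          (C.id (i + 1 + d + 1) ⊠ γ 1 (b + 1)))) :=
      (EA hC (by omega) (by omega) _ _ _).symm
    _ ≃' ((((C.id i ⊠ P.δ) ⊠ C.id (d + 1 + b)) ⬙ ((C.id (i + 1 + d + 1) ⊠ P.δ) ⊠
        C.id b)) ⬙ ((C.id (i + 1) ⊠ γ 1 (d + 1 + b + 1)) ⬙
          (C.id (i + 1 + d + 1) ⊠ γ 1 (b + 1)))) := Ecr hC h2
    _ ≃' (((C.id i ⊠ P.δ) ⊠ C.id (d + 1 + b)) ⬙ (((C.id (i + 1 + d + 1) ⊠ P.δ) ⊠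
        C.id b) ⬙ ((C.id (i + 1) ⊠ γ 1 (d + 1 + b + 1)) ⬙
          (C.id (i + 1 + d + 1) ⊠ γ 1 (b + 1))))) :=
      EA hC (by omega) (by omega) _ _ _
    _ ≃' (((C.id i ⊠ P.δ) ⊠ C.id (d + 1 + b)) ⬙ ((((C.id (i + 1 + d + 1) ⊠ P.δ) ⊠
        C.id b) ⬙ (C.id (i + 1) ⊠ γ 1 (d + 1 + b + 1))) ⬙
          (C.id (i + 1 + d + 1) ⊠ γ 1 (b + 1)))) :=
      Ecl hC (EA hC (by omega) (by omega) _ _ _).symm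
    _ ≃' (((C.id i ⊠ P.δ) ⊠ C.id (d + 1 + b)) ⬙ (((C.id (i + 1) ⊠
        γ 1 (d + 1 + b)) ⬙ ((C.id (i + 1 + d) ⊠ P.δ) ⊠ C.id (b + 1))) ⬙
          (C.id (i + 1 + d + 1) ⊠ γ 1 (b + 1)))) := Ecl hC (Ecr hC h3.symm)
    _ ≃' (((C.id i ⊠ P.δ) ⊠ C.id (d + 1 + b)) ⬙ ((C.id (i + 1) ⊠
        γ 1 (d + 1 + b)) ⬙ (((C.id (i + 1 + d) ⊠ P.δ) ⊠ C.id (b + 1)) ⬙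
          (C.id (i + 1 + d + 1) ⊠ γ 1 (b + 1))))) :=
      Ecl hC (EA hC (by omega) (by omega) _ _ _)
    _ ≃' ((((C.id i ⊠ P.δ) ⊠ C.id (d + 1 + b)) ⬙ (C.id (i + 1) ⊠
        γ 1 (d + 1 + b))) ⬙ (((C.id (i + 1 + d) ⊠ P.δ) ⊠ C.id (b + 1)) ⬙
          (C.id (i + 1 + d + 1) ⊠ γ 1 (b + 1)))) :=
      (EA hC (by omega) (by omega) _ _ _).symm
    _ ≃' (Fc P i (d + 1 + b) ⬙ Fc P (i + 1 + d) (b + 1)) := E.rfl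

theorem EF2diag (i b : ℕ) :
    E ((Fc P i b ⬙ Fc P i (b + 1)) ⬙ (C.id (i + 1 + b) ⊠ γ 1 1))
      (Fc P i b ⬙ Fc P i (b + 1)) := by
  have hA : E ((C.id (i + 1) ⊠ γ 1 b) ⬙ ((C.id i ⊠ P.δ) ⊠ C.id (b + 1)))
      (((C.id i ⊠ P.δ) ⊠ C.id (1 + b)) ⬙ (C.id (i + 2) ⊠ γ 1 b)) := by
    calc ((C.id (i + 1) ⊠ γ 1 b) ⬙ ((C.id i ⊠ P.δ) ⊠ C.id (b + 1)))
        ≃' ((C.id (i + 1) ⬙ (C.id i ⊠ P.δ)) ⊠ (γ 1 b ⬙ C.id (b + 1))) :=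
        Einter hC _ _ _ _ rfl (by omega) (by omega)
      _ ≃' ((C.id i ⊠ P.δ) ⊠ γ 1 b) :=
        E.tensor (Ehcp_id_left hC _ rfl) (Ehcp_id_right hC _ (by omega))
      _ ≃' (((C.id i ⊠ P.δ) ⊠ C.id (1 + b)) ⬙ (C.id (i + 2) ⊠ γ 1 b)) :=
        Esplit1 hC _ (γ 1 b)
  have hMain : E (Fc P i b ⬙ Fc P i (b + 1))
      (((C.id i ⊠ P.δ) ⊠ C.id b) ⬙ (((C.id i ⊠ P.δ) ⊠ C.id (1 + b)) ⬙
        ((C.id (i + 2) ⊠ γ 1 b) ⬙ (C.id (i + 1) ⊠ γ 1 (b + 1))))) := by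
    calc (Fc P i b ⬙ Fc P i (b + 1))
        ≃' (((C.id i ⊠ P.δ) ⊠ C.id b) ⬙ ((C.id (i + 1) ⊠ γ 1 b) ⬙
          (((C.id i ⊠ P.δ) ⊠ C.id (b + 1)) ⬙ (C.id (i + 1) ⊠ γ 1 (b + 1))))) :=
        EA hC (by omega) (by omega) _ _ _
      _ ≃' (((C.id i ⊠ P.δ) ⊠ C.id b) ⬙ (((C.id (i + 1) ⊠ γ 1 b) ⬙
          ((C.id i ⊠ P.δ) ⊠ C.id (b + 1))) ⬙ (C.id (i + 1) ⊠ γ 1 (b + 1)))) :=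
        Ecl hC (EA hC (by omega) (by omega) _ _ _).symm
      _ ≃' (((C.id i ⊠ P.δ) ⊠ C.id b) ⬙ ((((C.id i ⊠ P.δ) ⊠ C.id (1 + b)) ⬙
          (C.id (i + 2) ⊠ γ 1 b)) ⬙ (C.id (i + 1) ⊠ γ 1 (b + 1)))) :=
        Ecl hC (Ecr hC hA)
      _ ≃' (((C.id i ⊠ P.δ) ⊠ C.id b) ⬙ (((C.id i ⊠ P.δ) ⊠ C.id (1 + b)) ⬙
          ((C.id (i + 2) ⊠ γ 1 b) ⬙ (C.id (i + 1) ⊠ γ 1 (b + 1))))) :=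
        Ecl hC (EA hC (by omega) (by omega) _ _ _)
  have hΓΘ : E ((C.id (i + 2) ⊠ γ 1 b) ⬙ (C.id (i + 1) ⊠ γ 1 (b + 1)))
      (C.id (i + 1) ⊠ ((C.id 1 ⊠ γ 1 b) ⬙ γ 1 (b + 1))) := by
    calc ((C.id (i + 2) ⊠ γ 1 b) ⬙ (C.id (i + 1) ⊠ γ 1 (b + 1)))
        ≃' ((C.id (i + 1) ⊠ (C.id 1 ⊠ γ 1 b)) ⬙ (C.id (i + 1) ⊠ γ 1 (b + 1))) :=
        Ecr hC ((E.tensor (Eid (by omega : i + 2 = (i + 1) + 1)) E.rfl).trans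
          (Egr1 hC (i + 1) 1 (γ 1 b)).symm)
      _ ≃' (C.id (i + 1) ⊠ ((C.id 1 ⊠ γ 1 b) ⬙ γ 1 (b + 1))) :=
        (ETL hC (i + 1) _ _ (by omega)).symm
  have hΘ : E ((C.id 1 ⊠ γ 1 b) ⬙ γ 1 (b + 1)) (γ 2 b ⬙ (C.id b ⊠ γ 1 1)) := by
    calc ((C.id 1 ⊠ γ 1 b) ⬙ γ 1 (b + 1))
        ≃' ((C.id 1 ⊠ γ 1 b) ⬙ ((γ 1 b ⊠ C.id 1) ⬙ (C.id b ⊠ γ 1 1))) :=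
        Ecl hC (Eg1split hC b 1)
      _ ≃' (((C.id 1 ⊠ γ 1 b) ⬙ (γ 1 b ⊠ C.id 1)) ⬙ (C.id b ⊠ γ 1 1)) :=
        (EA hC (by omega) (by omega) _ _ _).symm
      _ ≃' (γ 2 b ⬙ (C.id b ⊠ γ 1 1)) := Ecr hC (Ehex11 hC b)
  have hcoreSwap : E (((C.id 1 ⊠ γ 1 b) ⬙ γ 1 (b + 1)) ⬙ (C.id b ⊠ γ 1 1))
      ((γ 1 1 ⊠ C.id b) ⬙ ((C.id 1 ⊠ γ 1 b) ⬙ γ 1 (b + 1))) := by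
    have u1 : E (((C.id 1 ⊠ γ 1 b) ⬙ γ 1 (b + 1)) ⬙ (C.id b ⊠ γ 1 1)) (γ 2 b) := by
      calc (((C.id 1 ⊠ γ 1 b) ⬙ γ 1 (b + 1)) ⬙ (C.id b ⊠ γ 1 1))
          ≃' ((γ 2 b ⬙ (C.id b ⊠ γ 1 1)) ⬙ (C.id b ⊠ γ 1 1)) := Ecr hC hΘ
        _ ≃' (γ 2 b ⬙ ((C.id b ⊠ γ 1 1) ⬙ (C.id b ⊠ γ 1 1))) :=
          EA hC (by omega) (by omega) _ _ _
        _ ≃' (γ 2 b ⬙ C.id (b + 2)) := Ecl hC (Eswap2 hC b)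
        _ ≃' (γ 2 b) := Ehcp_id_right hC _ (by omega)
    have u2 : E ((γ 1 1 ⊠ C.id b) ⬙ ((C.id 1 ⊠ γ 1 b) ⬙ γ 1 (b + 1))) (γ 2 b) := by
      calc ((γ 1 1 ⊠ C.id b) ⬙ ((C.id 1 ⊠ γ 1 b) ⬙ γ 1 (b + 1)))
          ≃' ((γ 1 1 ⊠ C.id b) ⬙ (γ 2 b ⬙ (C.id b ⊠ γ 1 1))) := Ecl hC hΘ
        _ ≃' (((γ 1 1 ⊠ C.id b) ⬙ γ 2 b) ⬙ (C.id b ⊠ γ 1 1)) :=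
          (EA hC (by omega) (by omega) _ _ _).symm
        _ ≃' ((γ 2 b ⬙ (C.id b ⊠ γ 1 1)) ⬙ (C.id b ⊠ γ 1 1)) := Ecr hC (Enat2b hC b)
        _ ≃' (γ 2 b ⬙ ((C.id b ⊠ γ 1 1) ⬙ (C.id b ⊠ γ 1 1))) :=
          EA hC (by omega) (by omega) _ _ _
        _ ≃' (γ 2 b ⬙ C.id (b + 2)) := Ecl hC (Eswap2 hC b)
        _ ≃' (γ 2 b) := Ehcp_id_right hC _ (by omega)
    exact u1.trans u2.symm
  have hswap : E (((C.id (i + 2) ⊠ γ 1 b) ⬙ (C.id (i + 1) ⊠ γ 1 (b + 1))) ⬙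
      (C.id (i + 1 + b) ⊠ γ 1 1))
      ((C.id (i + 1) ⊠ (γ 1 1 ⊠ C.id b)) ⬙
        ((C.id (i + 2) ⊠ γ 1 b) ⬙ (C.id (i + 1) ⊠ γ 1 (b + 1)))) := by
    calc (((C.id (i + 2) ⊠ γ 1 b) ⬙ (C.id (i + 1) ⊠ γ 1 (b + 1))) ⬙
        (C.id (i + 1 + b) ⊠ γ 1 1))
        ≃' ((C.id (i + 1) ⊠ ((C.id 1 ⊠ γ 1 b) ⬙ γ 1 (b + 1))) ⬙
          (C.id (i + 1) ⊠ (C.id b ⊠ γ 1 1))) :=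
        E.hcp hΓΘ ((E.tensor (Eid (by omega : i + 1 + b = (i + 1) + b)) E.rfl).trans
          (Egr1 hC (i + 1) b (γ 1 1)).symm)
      _ ≃' (C.id (i + 1) ⊠ ((((C.id 1 ⊠ γ 1 b) ⬙ γ 1 (b + 1))) ⬙ (C.id b ⊠ γ 1 1))) :=
        (ETL hC (i + 1) _ _ (by omega)).symm
      _ ≃' (C.id (i + 1) ⊠ ((γ 1 1 ⊠ C.id b) ⬙ ((C.id 1 ⊠ γ 1 b) ⬙ γ 1 (b + 1)))) :=
        E.tensor E.rfl hcoreSwap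
      _ ≃' ((C.id (i + 1) ⊠ (γ 1 1 ⊠ C.id b)) ⬙
          (C.id (i + 1) ⊠ ((C.id 1 ⊠ γ 1 b) ⬙ γ 1 (b + 1)))) := ETL hC (i + 1) _ _ (by omega)
      _ ≃' ((C.id (i + 1) ⊠ (γ 1 1 ⊠ C.id b)) ⬙
          ((C.id (i + 2) ⊠ γ 1 b) ⬙ (C.id (i + 1) ⊠ γ 1 (b + 1)))) := Ecl hC hΓΘ.symm
  have hδ3 : E (((C.id i ⊠ P.δ) ⊠ C.id b) ⬙ ((C.id i ⊠ P.δ) ⊠ C.id (1 + b)))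
      (C.id i ⊠ ((P.δ ⬙ (P.δ ⊠ C.id 1)) ⊠ C.id b)) := by
    calc (((C.id i ⊠ P.δ) ⊠ C.id b) ⬙ ((C.id i ⊠ P.δ) ⊠ C.id (1 + b)))
        ≃' ((C.id i ⊠ (P.δ ⊠ C.id b)) ⬙ (C.id i ⊠ (P.δ ⊠ C.id (1 + b)))) :=
        E.hcp (Etensor_assoc hC _ _ _) (Etensor_assoc hC _ _ _)
      _ ≃' (C.id i ⊠ ((P.δ ⊠ C.id b) ⬙ (P.δ ⊠ C.id (1 + b)))) :=
        (ETL hC i _ _ (by omega)).symm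
      _ ≃' (C.id i ⊠ ((P.δ ⊠ C.id b) ⬙ ((P.δ ⊠ C.id 1) ⊠ C.id b))) :=
        E.tensor E.rfl (Ecl hC (Egr2 hC 1 b P.δ).symm)
      _ ≃' (C.id i ⊠ ((P.δ ⬙ (P.δ ⊠ C.id 1)) ⊠ (C.id b ⬙ C.id b))) :=
        E.tensor E.rfl (Einter hC _ _ _ _ rfl rfl (by omega))
      _ ≃' (C.id i ⊠ ((P.δ ⬙ (P.δ ⊠ C.id 1)) ⊠ C.id b)) :=
        E.tensor E.rfl (E.tensor E.rfl (Ehcp_id_left hC _ rfl))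
  have hswapg : E (C.id (i + 1) ⊠ (γ 1 1 ⊠ C.id b))
      (C.id i ⊠ ((C.id 1 ⊠ γ 1 1) ⊠ C.id b)) := by
    calc (C.id (i + 1) ⊠ (γ 1 1 ⊠ C.id b))
        ≃' ((C.id (i + 1) ⊠ γ 1 1) ⊠ C.id b) := (Etensor_assoc hC _ _ _).symm
      _ ≃' ((C.id i ⊠ (C.id 1 ⊠ γ 1 1)) ⊠ C.id b) :=
        E.tensor (Egr1 hC i 1 (γ 1 1)).symm E.rfl
      _ ≃' (C.id i ⊠ ((C.id 1 ⊠ γ 1 1) ⊠ C.id b)) := Etensor_assoc hC _ _ _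
  have core' : E ((P.δ ⬙ (P.δ ⊠ C.id 1)) ⬙ (C.id 1 ⊠ γ 1 1)) (P.δ ⬙ (P.δ ⊠ C.id 1)) := by
    calc ((P.δ ⬙ (P.δ ⊠ C.id 1)) ⬙ (C.id 1 ⊠ γ 1 1))
        ≃' ((P.δ ⬙ (C.id 1 ⊠ P.δ)) ⬙ (C.id 1 ⊠ γ 1 1)) := Ecr hC (Ecoassoc P hC)
      _ ≃' (P.δ ⬙ ((C.id 1 ⊠ P.δ) ⬙ (C.id 1 ⊠ γ 1 1))) :=
        EA hC (by omega) (by omega) _ _ _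
      _ ≃' (P.δ ⬙ (C.id 1 ⊠ (P.δ ⬙ γ 1 1))) := Ecl hC (ETL hC 1 _ _ (by omega)).symm
      _ ≃' (P.δ ⬙ (C.id 1 ⊠ P.δ)) := Ecl hC (E.tensor E.rfl (Ecocomm P hC))
      _ ≃' (P.δ ⬙ (P.δ ⊠ C.id 1)) := (Ecoassoc P hC).symm
  have hΔΔ : E ((((C.id i ⊠ P.δ) ⊠ C.id b) ⬙ ((C.id i ⊠ P.δ) ⊠ C.id (1 + b))) ⬙
      (C.id (i + 1) ⊠ (γ 1 1 ⊠ C.id b)))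
      (((C.id i ⊠ P.δ) ⊠ C.id b) ⬙ ((C.id i ⊠ P.δ) ⊠ C.id (1 + b))) := by
    calc ((((C.id i ⊠ P.δ) ⊠ C.id b) ⬙ ((C.id i ⊠ P.δ) ⊠ C.id (1 + b))) ⬙
        (C.id (i + 1) ⊠ (γ 1 1 ⊠ C.id b)))
        ≃' ((C.id i ⊠ ((P.δ ⬙ (P.δ ⊠ C.id 1)) ⊠ C.id b)) ⬙
          (C.id i ⊠ ((C.id 1 ⊠ γ 1 1) ⊠ C.id b))) := E.hcp hδ3 hswapg
      _ ≃' (C.id i ⊠ (((P.δ ⬙ (P.δ ⊠ C.id 1)) ⊠ C.id b) ⬙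
          ((C.id 1 ⊠ γ 1 1) ⊠ C.id b))) := (ETL hC i _ _ (by omega)).symm
      _ ≃' (C.id i ⊠ (((P.δ ⬙ (P.δ ⊠ C.id 1)) ⬙ (C.id 1 ⊠ γ 1 1)) ⊠
          (C.id b ⬙ C.id b))) := E.tensor E.rfl (Einter hC _ _ _ _ (by omega) rfl (by omega))
      _ ≃' (C.id i ⊠ ((P.δ ⬙ (P.δ ⊠ C.id 1)) ⊠ C.id b)) :=
        E.tensor E.rfl (E.tensor core' (Ehcp_id_left hC _ rfl))
      _ ≃' (((C.id i ⊠ P.δ) ⊠ C.id b) ⬙ ((C.id i ⊠ P.δ) ⊠ C.id (1 + b))) := hδ3.symm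
  calc ((Fc P i b ⬙ Fc P i (b + 1)) ⬙ (C.id (i + 1 + b) ⊠ γ 1 1))
      ≃' ((((C.id i ⊠ P.δ) ⊠ C.id b) ⬙ (((C.id i ⊠ P.δ) ⊠ C.id (1 + b)) ⬙
        ((C.id (i + 2) ⊠ γ 1 b) ⬙ (C.id (i + 1) ⊠ γ 1 (b + 1))))) ⬙
          (C.id (i + 1 + b) ⊠ γ 1 1)) := Ecr hC hMain
    _ ≃' ((((C.id i ⊠ P.δ) ⊠ C.id b) ⬙ ((C.id i ⊠ P.δ) ⊠ C.id (1 + b))) ⬙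
        (((C.id (i + 2) ⊠ γ 1 b) ⬙ (C.id (i + 1) ⊠ γ 1 (b + 1))) ⬙
          (C.id (i + 1 + b) ⊠ γ 1 1))) := by
      calc ((((C.id i ⊠ P.δ) ⊠ C.id b) ⬙ (((C.id i ⊠ P.δ) ⊠ C.id (1 + b)) ⬙
          ((C.id (i + 2) ⊠ γ 1 b) ⬙ (C.id (i + 1) ⊠ γ 1 (b + 1))))) ⬙
            (C.id (i + 1 + b) ⊠ γ 1 1))
          ≃' (((C.id i ⊠ P.δ) ⊠ C.id b) ⬙ ((((C.id i ⊠ P.δ) ⊠ C.id (1 + b)) ⬙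
            ((C.id (i + 2) ⊠ γ 1 b) ⬙ (C.id (i + 1) ⊠ γ 1 (b + 1)))) ⬙
              (C.id (i + 1 + b) ⊠ γ 1 1))) := EA hC (by omega) (by omega) _ _ _
        _ ≃' (((C.id i ⊠ P.δ) ⊠ C.id b) ⬙ (((C.id i ⊠ P.δ) ⊠ C.id (1 + b)) ⬙
            (((C.id (i + 2) ⊠ γ 1 b) ⬙ (C.id (i + 1) ⊠ γ 1 (b + 1))) ⬙
              (C.id (i + 1 + b) ⊠ γ 1 1)))) :=
          Ecl hC (EA hC (by omega) (by omega) _ _ _)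
        _ ≃' ((((C.id i ⊠ P.δ) ⊠ C.id b) ⬙ ((C.id i ⊠ P.δ) ⊠ C.id (1 + b))) ⬙
            (((C.id (i + 2) ⊠ γ 1 b) ⬙ (C.id (i + 1) ⊠ γ 1 (b + 1))) ⬙
              (C.id (i + 1 + b) ⊠ γ 1 1))) :=
          (EA hC (by omega) (by omega) _ _ _).symm
    _ ≃' ((((C.id i ⊠ P.δ) ⊠ C.id b) ⬙ ((C.id i ⊠ P.δ) ⊠ C.id (1 + b))) ⬙
        ((C.id (i + 1) ⊠ (γ 1 1 ⊠ C.id b)) ⬙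
          ((C.id (i + 2) ⊠ γ 1 b) ⬙ (C.id (i + 1) ⊠ γ 1 (b + 1))))) := Ecl hC hswap
    _ ≃' (((((C.id i ⊠ P.δ) ⊠ C.id b) ⬙ ((C.id i ⊠ P.δ) ⊠ C.id (1 + b))) ⬙
        (C.id (i + 1) ⊠ (γ 1 1 ⊠ C.id b))) ⬙
          ((C.id (i + 2) ⊠ γ 1 b) ⬙ (C.id (i + 1) ⊠ γ 1 (b + 1)))) :=
      (EA hC (by omega) (by omega) _ _ _).symm
    _ ≃' ((((C.id i ⊠ P.δ) ⊠ C.id b) ⬙ ((C.id i ⊠ P.δ) ⊠ C.id (1 + b))) ⬙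
        ((C.id (i + 2) ⊠ γ 1 b) ⬙ (C.id (i + 1) ⊠ γ 1 (b + 1)))) := Ecr hC hΔΔ
    _ ≃' (((C.id i ⊠ P.δ) ⊠ C.id b) ⬙ (((C.id i ⊠ P.δ) ⊠ C.id (1 + b)) ⬙
        ((C.id (i + 2) ⊠ γ 1 b) ⬙ (C.id (i + 1) ⊠ γ 1 (b + 1))))) :=
      EA hC (by omega) (by omega) _ _ _
    _ ≃' (Fc P i b ⬙ Fc P i (b + 1)) := hMain.symm

theorem EF2 (i j a b : ℕ) (h : i + a = j + b) :
    E (Fc P j b ⬙ Fc P i (a + 1))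
      ((Fc P i a ⬙ Fc P j (b + 1)) ⬙ (C.id (i + 1 + a) ⊠ γ 1 1)) := by
  rcases Nat.lt_trichotomy i j with hij | rfl | hij
  · obtain ⟨d, rfl⟩ : ∃ d, j = i + 1 + d := ⟨j - i - 1, by omega⟩
    obtain rfl : a = d + 1 + b := by omega
    calc (Fc P (i + 1 + d) b ⬙ Fc P i (d + 1 + b + 1))
        ≃' (Fc P (i + 1 + d) b ⬙ ((Fc P i (d + 1 + b) ⊠ C.id 1) ⬙
          (C.id (i + 1 + (d + 1 + b)) ⊠ γ 1 1))) := Ecl hC (EF3 P hC i (d + 1 + b))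
      _ ≃' ((Fc P (i + 1 + d) b ⬙ (Fc P i (d + 1 + b) ⊠ C.id 1)) ⬙
          (C.id (i + 1 + (d + 1 + b)) ⊠ γ 1 1)) :=
        (EA hC (by omega) (by omega) _ _ _).symm
      _ ≃' ((Fc P i (d + 1 + b) ⬙ Fc P (i + 1 + d) (b + 1)) ⬙
          (C.id (i + 1 + (d + 1 + b)) ⊠ γ 1 1)) := Ecr hC (EF2lt P hC i d b)
  · obtain rfl : a = b := by omega
    exact (EF2diag P hC i a).symm
  · obtain ⟨d, rfl⟩ : ∃ d, i = j + 1 + d := ⟨i - j - 1, by omega⟩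
    obtain rfl : b = d + 1 + a := by omega
    refine E.symm ?_
    calc ((Fc P (j + 1 + d) a ⬙ Fc P j (d + 1 + a + 1)) ⬙
        (C.id (j + 1 + d + 1 + a) ⊠ γ 1 1))
        ≃' ((Fc P (j + 1 + d) a ⬙ ((Fc P j (d + 1 + a) ⊠ C.id 1) ⬙
          (C.id (j + 1 + (d + 1 + a)) ⊠ γ 1 1))) ⬙
            (C.id (j + 1 + d + 1 + a) ⊠ γ 1 1)) :=
        Ecr hC (Ecl hC (EF3 P hC j (d + 1 + a)))
      _ ≃' (((Fc P (j + 1 + d) a ⬙ (Fc P j (d + 1 + a) ⊠ C.id 1)) ⬙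
          (C.id (j + 1 + (d + 1 + a)) ⊠ γ 1 1)) ⬙
            (C.id (j + 1 + d + 1 + a) ⊠ γ 1 1)) :=
        Ecr hC (EA hC (by omega) (by omega) _ _ _).symm
      _ ≃' (((Fc P j (d + 1 + a) ⬙ Fc P (j + 1 + d) (a + 1)) ⬙
          (C.id (j + 1 + (d + 1 + a)) ⊠ γ 1 1)) ⬙
            (C.id (j + 1 + d + 1 + a) ⊠ γ 1 1)) :=
        Ecr hC (Ecr hC (EF2lt P hC j d a))
      _ ≃' ((Fc P j (d + 1 + a) ⬙ Fc P (j + 1 + d) (a + 1)) ⬙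
          ((C.id (j + 1 + (d + 1 + a)) ⊠ γ 1 1) ⬙
            (C.id (j + 1 + d + 1 + a) ⊠ γ 1 1))) :=
        EA hC (by omega) (by omega) _ _ _
      _ ≃' ((Fc P j (d + 1 + a) ⬙ Fc P (j + 1 + d) (a + 1)) ⬙
          ((C.id (j + 1 + d + 1 + a) ⊠ γ 1 1) ⬙
            (C.id (j + 1 + d + 1 + a) ⊠ γ 1 1))) :=
        Ecl hC (Ecr hC (E.tensor (Eid (by omega)) E.rfl))
      _ ≃' ((Fc P j (d + 1 + a) ⬙ Fc P (j + 1 + d) (a + 1)) ⬙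
          C.id (j + 1 + d + 1 + a + 2)) := Ecl hC (Eswap2 hC (j + 1 + d + 1 + a))
      _ ≃' (Fc P j (d + 1 + a) ⬙ Fc P (j + 1 + d) (a + 1)) :=
        Ehcp_id_right hC _ (by omega)

omit hC in
theorem EWcongr {n n' i : ℕ} (h : n = n') : E (Wd C γ P n i) (Wd C γ P n' i) := by
  subst h; exact E.rfl

theorem EWd (i k : ℕ) :
    E (Wd C γ P (i + 1 + k) i)
      (Fc P i (k + 1) ⬙ (C.id (i + 1 + k) ⊠ P.μ)) := by
  have hlt : i < i + 1 + k := by omega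
  have e1 : i + 1 + k - i = k + 1 := by omega
  have e2 : i + 1 + k - i - 1 = k := by omega
  unfold Wd
  rw [dif_pos hlt]
  refine E.trans (EcompE (E.cst _ _ _)
    (EcompE (E.cst _ _ _) E.rfl (by omega)) (by omega)) ?_
  calc ((C.id i ⊠ (P.δ ⊠ C.id (i + 1 + k - i))) ⬙
      ((C.id (i + 1) ⊠ (γ 1 (i + 1 + k - i - 1) ⊠ C.id 1)) ⬙ (C.id (i + 1 + k) ⊠ P.μ)))
      ≃' ((C.id i ⊠ (P.δ ⊠ C.id (k + 1))) ⬙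
      ((C.id (i + 1) ⊠ (γ 1 k ⊠ C.id 1)) ⬙ (C.id (i + 1 + k) ⊠ P.μ))) :=
      E.hcp (E.tensor E.rfl (E.tensor E.rfl (Eid e1)))
        (Ecr hC (E.tensor E.rfl (E.tensor (Egamma_congr hC rfl e2) E.rfl)))
    _ ≃' (((C.id i ⊠ P.δ) ⊠ C.id (k + 1)) ⬙
        ((C.id (i + 1) ⊠ (γ 1 k ⊠ C.id 1)) ⬙ (C.id (i + 1 + k) ⊠ P.μ))) :=
      Ecr hC (Etensor_assoc hC _ _ _).symm
    _ ≃' (((C.id i ⊠ P.δ) ⊠ C.id (k + 1)) ⬙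
        ((C.id (i + 1) ⊠ (γ 1 k ⊠ C.id 1)) ⬙ ((C.id (i + 1 + k) ⊠ γ 1 1) ⬙
          (C.id (i + 1 + k) ⊠ P.μ)))) := by
      refine Ecl hC (Ecl hC ?_)
      calc (C.id (i + 1 + k) ⊠ P.μ)
          ≃' (C.id (i + 1 + k) ⊠ (γ 1 1 ⬙ P.μ)) :=
          E.tensor E.rfl (Emu_comm P hC).symm
        _ ≃' ((C.id (i + 1 + k) ⊠ γ 1 1) ⬙ (C.id (i + 1 + k) ⊠ P.μ)) :=
          ETL hC (i + 1 + k) _ _ (by omega)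
    _ ≃' (((C.id i ⊠ P.δ) ⊠ C.id (k + 1)) ⬙
        (((C.id (i + 1) ⊠ (γ 1 k ⊠ C.id 1)) ⬙ (C.id (i + 1 + k) ⊠ γ 1 1)) ⬙
          (C.id (i + 1 + k) ⊠ P.μ))) := Ecl hC (EA hC (by omega) (by omega) _ _ _).symm
    _ ≃' (((C.id i ⊠ P.δ) ⊠ C.id (k + 1)) ⬙
        ((C.id (i + 1) ⊠ γ 1 (k + 1)) ⬙ (C.id (i + 1 + k) ⊠ P.μ))) := by
      refine Ecl hC (Ecr hC ?_)
      calc ((C.id (i + 1) ⊠ (γ 1 k ⊠ C.id 1)) ⬙ (C.id (i + 1 + k) ⊠ γ 1 1))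
          ≃' ((C.id (i + 1) ⊠ (γ 1 k ⊠ C.id 1)) ⬙
            (C.id (i + 1) ⊠ (C.id k ⊠ γ 1 1))) :=
          Ecl hC (Egr1 hC (i + 1) k (γ 1 1)).symm
        _ ≃' (C.id (i + 1) ⊠ ((γ 1 k ⊠ C.id 1) ⬙ (C.id k ⊠ γ 1 1))) :=
          (ETL hC (i + 1) _ _ (by omega)).symm
        _ ≃' (C.id (i + 1) ⊠ γ 1 (k + 1)) := E.tensor E.rfl (Eg1split hC k 1).symm
    _ ≃' (Fc P i (k + 1) ⬙ (C.id (i + 1 + k) ⊠ P.μ)) :=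
      (EA hC (by omega) (by omega) _ _ _).symm

/-- η-insertion before the last wire commutes with `Fc` -/
theorem EFeta (i k : ℕ) :
    E (Fc P i (k + 1) ⬙ ((C.id (i + 1 + k) ⊠ P.η) ⊠ C.id 2))
      (((C.id (i + 1 + k) ⊠ P.η) ⊠ C.id 1) ⬙ Fc P i (k + 2)) := by
  have hGN : E (((C.id (i + 1 + k) ⊠ P.η) ⬙ Fc P i (k + 1)) ⊠ C.id 1)
      ((Fc P i k ⬙ ((C.id (i + 1 + k) ⊠ P.η) ⊠ C.id 1)) ⊠ C.id 1) :=
    E.tensor (EGN P hC P.η i k) E.rfl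
  have htens : E (((C.id (i + 1 + k) ⊠ P.η) ⊠ C.id 1) ⬙ (Fc P i (k + 1) ⊠ C.id 1))
      ((Fc P i k ⊠ C.id 1) ⬙ (((C.id (i + 1 + k) ⊠ P.η) ⊠ C.id 1) ⊠ C.id 1)) :=
    ((ETR hC 1 _ _ (by omega)).symm.trans hGN).trans (ETR hC 1 _ _ (by omega))
  have hsw : E ((C.id (i + 1 + k) ⊠ γ 1 1) ⬙ ((C.id (i + 1 + k) ⊠ P.η) ⊠ C.id 2))
      (((C.id (i + 1 + k) ⊠ P.η) ⊠ C.id 2) ⬙ (C.id (i + 1 + k + 1) ⊠ γ 1 1)) := by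
    have inner : E (γ 1 1 ⬙ (P.η ⊠ C.id 2)) ((P.η ⊠ C.id 2) ⬙ (C.id 1 ⊠ γ 1 1)) := by
      calc (γ 1 1 ⬙ (P.η ⊠ C.id 2))
          ≃' ((C.id 0 ⊠ γ 1 1) ⬙ (P.η ⊠ C.id 2)) := Ecr hC (Eunit_l hC (γ 1 1)).symm
        _ ≃' (P.η ⊠ γ 1 1) := (Esplit2 hC P.η (γ 1 1)).symm
        _ ≃' ((P.η ⊠ C.id 2) ⬙ (C.id 1 ⊠ γ 1 1)) := Esplit1 hC P.η (γ 1 1)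
    calc ((C.id (i + 1 + k) ⊠ γ 1 1) ⬙ ((C.id (i + 1 + k) ⊠ P.η) ⊠ C.id 2))
        ≃' ((C.id (i + 1 + k) ⊠ γ 1 1) ⬙ (C.id (i + 1 + k) ⊠ (P.η ⊠ C.id 2))) :=
        Ecl hC (Etensor_assoc hC _ _ _)
      _ ≃' (C.id (i + 1 + k) ⊠ (γ 1 1 ⬙ (P.η ⊠ C.id 2))) :=
        (ETL hC (i + 1 + k) _ _ (by omega)).symm
      _ ≃' (C.id (i + 1 + k) ⊠ ((P.η ⊠ C.id 2) ⬙ (C.id 1 ⊠ γ 1 1))) :=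
        E.tensor E.rfl inner
      _ ≃' ((C.id (i + 1 + k) ⊠ (P.η ⊠ C.id 2)) ⬙
          (C.id (i + 1 + k) ⊠ (C.id 1 ⊠ γ 1 1))) := ETL hC (i + 1 + k) _ _ (by omega)
      _ ≃' (((C.id (i + 1 + k) ⊠ P.η) ⊠ C.id 2) ⬙ (C.id (i + 1 + k + 1) ⊠ γ 1 1)) :=
        E.hcp (Etensor_assoc hC _ _ _).symm
          ((Egr1 hC (i + 1 + k) 1 (γ 1 1)).trans (E.tensor (Eid (by omega)) E.rfl))
  calc (Fc P i (k + 1) ⬙ ((C.id (i + 1 + k) ⊠ P.η) ⊠ C.id 2))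
      ≃' (((Fc P i k ⊠ C.id 1) ⬙ (C.id (i + 1 + k) ⊠ γ 1 1)) ⬙
        ((C.id (i + 1 + k) ⊠ P.η) ⊠ C.id 2)) := Ecr hC (EF3 P hC i k)
    _ ≃' ((Fc P i k ⊠ C.id 1) ⬙ ((C.id (i + 1 + k) ⊠ γ 1 1) ⬙
        ((C.id (i + 1 + k) ⊠ P.η) ⊠ C.id 2))) := EA hC (by omega) (by omega) _ _ _
    _ ≃' ((Fc P i k ⊠ C.id 1) ⬙ (((C.id (i + 1 + k) ⊠ P.η) ⊠ C.id 2) ⬙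
        (C.id (i + 1 + k + 1) ⊠ γ 1 1))) := Ecl hC hsw
    _ ≃' ((Fc P i k ⊠ C.id 1) ⬙ ((((C.id (i + 1 + k) ⊠ P.η) ⊠ C.id 1) ⊠ C.id 1) ⬙
        (C.id (i + 1 + k + 1) ⊠ γ 1 1))) := Ecl hC (Ecr hC (Egr2 hC 1 1 _).symm)
    _ ≃' (((Fc P i k ⊠ C.id 1) ⬙ (((C.id (i + 1 + k) ⊠ P.η) ⊠ C.id 1) ⊠ C.id 1)) ⬙
        (C.id (i + 1 + k + 1) ⊠ γ 1 1)) := (EA hC (by omega) (by omega) _ _ _).symm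
    _ ≃' ((((C.id (i + 1 + k) ⊠ P.η) ⊠ C.id 1) ⬙ (Fc P i (k + 1) ⊠ C.id 1)) ⬙
        (C.id (i + 1 + k + 1) ⊠ γ 1 1)) := Ecr hC htens.symm
    _ ≃' (((C.id (i + 1 + k) ⊠ P.η) ⊠ C.id 1) ⬙ ((Fc P i (k + 1) ⊠ C.id 1) ⬙
        (C.id (i + 1 + k + 1) ⊠ γ 1 1))) := EA hC (by omega) (by omega) _ _ _
    _ ≃' (((C.id (i + 1 + k) ⊠ P.η) ⊠ C.id 1) ⬙ Fc P i (k + 2)) := by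
      refine Ecl hC ?_
      exact (Ecl hC (E.tensor (Eid (by omega : i + 1 + k + 1 = i + 1 + (k + 1)))
        E.rfl)).trans (EF3 P hC i (k + 1)).symm

theorem EF3inv (i k : ℕ) :
    E (Fc P i (k + 1) ⊠ C.id 1)
      (Fc P i (k + 2) ⬙ (C.id (i + 1 + (k + 1)) ⊠ γ 1 1)) := by
  refine E.symm ?_
  calc (Fc P i (k + 2) ⬙ (C.id (i + 1 + (k + 1)) ⊠ γ 1 1))
      ≃' (((Fc P i (k + 1) ⊠ C.id 1) ⬙ (C.id (i + 1 + (k + 1)) ⊠ γ 1 1)) ⬙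
        (C.id (i + 1 + (k + 1)) ⊠ γ 1 1)) := Ecr hC (EF3 P hC i (k + 1))
    _ ≃' ((Fc P i (k + 1) ⊠ C.id 1) ⬙ ((C.id (i + 1 + (k + 1)) ⊠ γ 1 1) ⬙
        (C.id (i + 1 + (k + 1)) ⊠ γ 1 1))) := EA hC (by omega) (by omega) _ _ _
    _ ≃' ((Fc P i (k + 1) ⊠ C.id 1) ⬙ C.id (i + 1 + (k + 1) + 2)) :=
      Ecl hC (Eswap2 hC (i + 1 + (k + 1)))
    _ ≃' (Fc P i (k + 1) ⊠ C.id 1) := Ehcp_id_right hC _ (by omega)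

theorem EL1 (n i : ℕ) (h : i < n) :
    E (Wd C γ P n i ⬙ ((C.id n ⊠ P.η) ⊠ C.id 1))
      (((C.id n ⊠ P.η) ⊠ C.id 1) ⬙ Wd C γ P (n + 1) i) := by
  obtain ⟨k, rfl⟩ : ∃ k, n = i + 1 + k := ⟨n - i - 1, by omega⟩
  have hinner : E (P.μ ⬙ (P.η ⊠ C.id 1)) ((P.η ⊠ C.id 2) ⬙ (C.id 1 ⊠ P.μ)) := by
    calc (P.μ ⬙ (P.η ⊠ C.id 1))
        ≃' ((C.id 0 ⊠ P.μ) ⬙ (P.η ⊠ C.id 1)) := Ecr hC (Eunit_l hC P.μ).symm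
      _ ≃' (P.η ⊠ P.μ) := (Esplit2 hC P.η P.μ).symm
      _ ≃' ((P.η ⊠ C.id 2) ⬙ (C.id 1 ⊠ P.μ)) := Esplit1 hC P.η P.μ
  have hμη : E ((C.id (i + 1 + k) ⊠ P.μ) ⬙ ((C.id (i + 1 + k) ⊠ P.η) ⊠ C.id 1))
      (((C.id (i + 1 + k) ⊠ P.η) ⊠ C.id 2) ⬙ (C.id (i + 1 + k + 1) ⊠ P.μ)) := by
    calc ((C.id (i + 1 + k) ⊠ P.μ) ⬙ ((C.id (i + 1 + k) ⊠ P.η) ⊠ C.id 1))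
        ≃' ((C.id (i + 1 + k) ⊠ P.μ) ⬙ (C.id (i + 1 + k) ⊠ (P.η ⊠ C.id 1))) :=
        Ecl hC (Etensor_assoc hC _ _ _)
      _ ≃' (C.id (i + 1 + k) ⊠ (P.μ ⬙ (P.η ⊠ C.id 1))) :=
        (ETL hC (i + 1 + k) _ _ (by omega)).symm
      _ ≃' (C.id (i + 1 + k) ⊠ ((P.η ⊠ C.id 2) ⬙ (C.id 1 ⊠ P.μ))) :=
        E.tensor E.rfl hinner
      _ ≃' ((C.id (i + 1 + k) ⊠ (P.η ⊠ C.id 2)) ⬙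
          (C.id (i + 1 + k) ⊠ (C.id 1 ⊠ P.μ))) := ETL hC (i + 1 + k) _ _ (by omega)
      _ ≃' (((C.id (i + 1 + k) ⊠ P.η) ⊠ C.id 2) ⬙ (C.id (i + 1 + k + 1) ⊠ P.μ)) :=
        E.hcp (Etensor_assoc hC _ _ _).symm (Egr1 hC (i + 1 + k) 1 P.μ)
  calc (Wd C γ P (i + 1 + k) i ⬙ ((C.id (i + 1 + k) ⊠ P.η) ⊠ C.id 1))
      ≃' ((Fc P i (k + 1) ⬙ (C.id (i + 1 + k) ⊠ P.μ)) ⬙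
        ((C.id (i + 1 + k) ⊠ P.η) ⊠ C.id 1)) := Ecr hC (EWd P hC i k)
    _ ≃' (Fc P i (k + 1) ⬙ ((C.id (i + 1 + k) ⊠ P.μ) ⬙
        ((C.id (i + 1 + k) ⊠ P.η) ⊠ C.id 1))) := EA hC (by omega) (by omega) _ _ _
    _ ≃' (Fc P i (k + 1) ⬙ (((C.id (i + 1 + k) ⊠ P.η) ⊠ C.id 2) ⬙
        (C.id (i + 1 + k + 1) ⊠ P.μ))) := Ecl hC hμη
    _ ≃' ((Fc P i (k + 1) ⬙ ((C.id (i + 1 + k) ⊠ P.η) ⊠ C.id 2)) ⬙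
        (C.id (i + 1 + k + 1) ⊠ P.μ)) := (EA hC (by omega) (by omega) _ _ _).symm
    _ ≃' ((((C.id (i + 1 + k) ⊠ P.η) ⊠ C.id 1) ⬙ Fc P i (k + 2)) ⬙
        (C.id (i + 1 + k + 1) ⊠ P.μ)) := Ecr hC (EFeta P hC i k)
    _ ≃' (((C.id (i + 1 + k) ⊠ P.η) ⊠ C.id 1) ⬙ (Fc P i (k + 2) ⬙
        (C.id (i + 1 + k + 1) ⊠ P.μ))) := EA hC (by omega) (by omega) _ _ _
    _ ≃' (((C.id (i + 1 + k) ⊠ P.η) ⊠ C.id 1) ⬙ (Fc P i (k + 1 + 1) ⬙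
        (C.id (i + 1 + (k + 1)) ⊠ P.μ))) :=
      Ecl hC (Ecl hC (E.tensor (Eid (by omega)) E.rfl))
    _ ≃' (((C.id (i + 1 + k) ⊠ P.η) ⊠ C.id 1) ⬙ Wd C γ P (i + 1 + (k + 1)) i) :=
      Ecl hC (EWd P hC i (k + 1)).symm
    _ ≃' (((C.id (i + 1 + k) ⊠ P.η) ⊠ C.id 1) ⬙ Wd C γ P (i + 1 + k + 1) i) :=
      Ecl hC (EWcongr P (by omega))

theorem EL2 (n i : ℕ) (h : i < n) :
    E (Wd C γ P (n + 1) i ⬙ (C.id n ⊠ γ 1 1))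
      ((C.id n ⊠ γ 1 1) ⬙ (Wd C γ P n i ⊠ C.id 1)) := by
  obtain ⟨k, rfl⟩ : ∃ k, n = i + 1 + k := ⟨n - i - 1, by omega⟩
  have hg12 : E (C.id (i + 1 + k) ⊠ γ 1 2)
      (((C.id (i + 1 + k) ⊠ γ 1 1) ⊠ C.id 1) ⬙ (C.id (i + 1 + k + 1) ⊠ γ 1 1)) := by
    calc (C.id (i + 1 + k) ⊠ γ 1 2)
        ≃' (C.id (i + 1 + k) ⊠ ((γ 1 1 ⊠ C.id 1) ⬙ (C.id 1 ⊠ γ 1 1))) :=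
        E.tensor E.rfl ((Egamma_congr hC rfl (by omega : (2:ℕ) = 1 + 1)).trans
          (Eg1split hC 1 1))
      _ ≃' ((C.id (i + 1 + k) ⊠ (γ 1 1 ⊠ C.id 1)) ⬙
          (C.id (i + 1 + k) ⊠ (C.id 1 ⊠ γ 1 1))) := ETL hC (i + 1 + k) _ _ (by omega)
      _ ≃' (((C.id (i + 1 + k) ⊠ γ 1 1) ⊠ C.id 1) ⬙ (C.id (i + 1 + k + 1) ⊠ γ 1 1)) :=
        E.hcp (Etensor_assoc hC _ _ _).symm (Egr1 hC (i + 1 + k) 1 (γ 1 1))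
  have hkey : E ((C.id (i + 1 + k) ⊠ γ 1 1) ⬙ (Fc P i (k + 1) ⊠ C.id 1))
      (Fc P i (k + 2) ⬙ (C.id (i + 1 + k) ⊠ γ 1 2)) := by
    calc ((C.id (i + 1 + k) ⊠ γ 1 1) ⬙ (Fc P i (k + 1) ⊠ C.id 1))
        ≃' ((C.id (i + 1 + k) ⊠ γ 1 1) ⬙ (Fc P i (k + 2) ⬙
          (C.id (i + 1 + (k + 1)) ⊠ γ 1 1))) := Ecl hC (EF3inv P hC i k)
      _ ≃' (((C.id (i + 1 + k) ⊠ γ 1 1) ⬙ Fc P i (k + 2)) ⬙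
          (C.id (i + 1 + (k + 1)) ⊠ γ 1 1)) := (EA hC (by omega) (by omega) _ _ _).symm
      _ ≃' ((Fc P i (k + 2) ⬙ ((C.id (i + 1 + k) ⊠ γ 1 1) ⊠ C.id 1)) ⬙
          (C.id (i + 1 + (k + 1)) ⊠ γ 1 1)) := Ecr hC (EGN P hC (γ 1 1) i k)
      _ ≃' (Fc P i (k + 2) ⬙ (((C.id (i + 1 + k) ⊠ γ 1 1) ⊠ C.id 1) ⬙
          (C.id (i + 1 + (k + 1)) ⊠ γ 1 1))) := EA hC (by omega) (by omega) _ _ _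
      _ ≃' (Fc P i (k + 2) ⬙ (((C.id (i + 1 + k) ⊠ γ 1 1) ⊠ C.id 1) ⬙
          (C.id (i + 1 + k + 1) ⊠ γ 1 1))) :=
        Ecl hC (Ecl hC (E.tensor (Eid (by omega)) E.rfl))
      _ ≃' (Fc P i (k + 2) ⬙ (C.id (i + 1 + k) ⊠ γ 1 2)) := Ecl hC hg12.symm
  have hinner1 : E ((C.id (i + 1 + k + 1) ⊠ P.μ) ⬙ (C.id (i + 1 + k) ⊠ γ 1 1))
      ((C.id (i + 1 + k) ⊠ γ 1 2) ⬙ ((C.id (i + 1 + k) ⊠ P.μ) ⊠ C.id 1)) := by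
    calc ((C.id (i + 1 + k + 1) ⊠ P.μ) ⬙ (C.id (i + 1 + k) ⊠ γ 1 1))
        ≃' ((C.id (i + 1 + k) ⊠ (C.id 1 ⊠ P.μ)) ⬙ (C.id (i + 1 + k) ⊠ γ 1 1)) :=
        Ecr hC (Egr1 hC (i + 1 + k) 1 P.μ).symm
      _ ≃' (C.id (i + 1 + k) ⊠ ((C.id 1 ⊠ P.μ) ⬙ γ 1 1)) :=
        (ETL hC (i + 1 + k) _ _ (by omega)).symm
      _ ≃' (C.id (i + 1 + k) ⊠ (γ 1 2 ⬙ (P.μ ⊠ C.id 1))) :=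
        E.tensor E.rfl (Enat hC (C.id 1) P.μ)
      _ ≃' ((C.id (i + 1 + k) ⊠ γ 1 2) ⬙ (C.id (i + 1 + k) ⊠ (P.μ ⊠ C.id 1))) :=
        ETL hC (i + 1 + k) _ _ (by omega)
      _ ≃' ((C.id (i + 1 + k) ⊠ γ 1 2) ⬙ ((C.id (i + 1 + k) ⊠ P.μ) ⊠ C.id 1)) :=
        Ecl hC (Etensor_assoc hC _ _ _).symm
  calc (Wd C γ P (i + 1 + k + 1) i ⬙ (C.id (i + 1 + k) ⊠ γ 1 1))
      ≃' ((Fc P i (k + 2) ⬙ (C.id (i + 1 + (k + 1)) ⊠ P.μ)) ⬙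
        (C.id (i + 1 + k) ⊠ γ 1 1)) :=
      Ecr hC ((EWcongr P (by omega)).trans (EWd P hC i (k + 1)))
    _ ≃' ((Fc P i (k + 2) ⬙ (C.id (i + 1 + k + 1) ⊠ P.μ)) ⬙
        (C.id (i + 1 + k) ⊠ γ 1 1)) :=
      Ecr hC (Ecl hC (E.tensor (Eid (by omega)) E.rfl))
    _ ≃' (Fc P i (k + 2) ⬙ ((C.id (i + 1 + k + 1) ⊠ P.μ) ⬙
        (C.id (i + 1 + k) ⊠ γ 1 1))) := EA hC (by omega) (by omega) _ _ _
    _ ≃' (Fc P i (k + 2) ⬙ ((C.id (i + 1 + k) ⊠ γ 1 2) ⬙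
        ((C.id (i + 1 + k) ⊠ P.μ) ⊠ C.id 1))) := Ecl hC hinner1
    _ ≃' ((Fc P i (k + 2) ⬙ (C.id (i + 1 + k) ⊠ γ 1 2)) ⬙
        ((C.id (i + 1 + k) ⊠ P.μ) ⊠ C.id 1)) := (EA hC (by omega) (by omega) _ _ _).symm
    _ ≃' (((C.id (i + 1 + k) ⊠ γ 1 1) ⬙ (Fc P i (k + 1) ⊠ C.id 1)) ⬙
        ((C.id (i + 1 + k) ⊠ P.μ) ⊠ C.id 1)) := Ecr hC hkey.symm
    _ ≃' ((C.id (i + 1 + k) ⊠ γ 1 1) ⬙ ((Fc P i (k + 1) ⊠ C.id 1) ⬙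
        ((C.id (i + 1 + k) ⊠ P.μ) ⊠ C.id 1))) := EA hC (by omega) (by omega) _ _ _
    _ ≃' ((C.id (i + 1 + k) ⊠ γ 1 1) ⬙ ((Fc P i (k + 1) ⬙
        (C.id (i + 1 + k) ⊠ P.μ)) ⊠ C.id 1)) := Ecl hC (ETR hC 1 _ _ (by omega)).symm
    _ ≃' ((C.id (i + 1 + k) ⊠ γ 1 1) ⬙ (Wd C γ P (i + 1 + k) i ⊠ C.id 1)) :=
      Ecl hC (E.tensor (EWd P hC i k).symm E.rfl)

theorem EL6 (n i j : ℕ) (hi : i < n) (hj : j < n) :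
    E (Wd C γ P (n + 1) j ⬙ (Wd C γ P n i ⊠ C.id 1))
      ((Wd C γ P n i ⊠ C.id 1) ⬙ Wd C γ P (n + 1) j) := by
  obtain ⟨ki, hki⟩ : ∃ k, n = i + 1 + k := ⟨n - i - 1, by omega⟩
  obtain ⟨kj, hkj⟩ : ∃ k, n = j + 1 + k := ⟨n - j - 1, by omega⟩
  have eWj1 : E (Wd C γ P (n + 1) j)
      (Fc P j (kj + 2) ⬙ (C.id (n + 1) ⊠ P.μ)) :=
    ((EWcongr P (by omega)).trans (EWd P hC j (kj + 1))).trans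
      (Ecl hC (E.tensor (Eid (by omega)) E.rfl))
  have eWi : E (Wd C γ P n i) (Fc P i (ki + 1) ⬙ (C.id n ⊠ P.μ)) :=
    ((EWcongr P (by omega)).trans (EWd P hC i ki)).trans
      (Ecl hC (E.tensor (Eid (by omega)) E.rfl))
  have hBi : E (Wd C γ P n i ⊠ C.id 1)
      ((Fc P i (ki + 1) ⊠ C.id 1) ⬙ ((C.id n ⊠ P.μ) ⊠ C.id 1)) :=
    (E.tensor eWi E.rfl).trans (ETR hC 1 _ _ (by omega))
  have hC1 : E ((C.id (n + 1) ⊠ P.μ) ⬙ (Fc P i (ki + 1) ⊠ C.id 1))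
      ((Fc P i (ki + 1) ⊠ C.id 2) ⬙ (C.id (n + 2) ⊠ P.μ)) := by
    calc ((C.id (n + 1) ⊠ P.μ) ⬙ (Fc P i (ki + 1) ⊠ C.id 1))
        ≃' ((C.id (n + 1) ⬙ Fc P i (ki + 1)) ⊠ (P.μ ⬙ C.id 1)) :=
        Einter hC _ _ _ _ (by omega) rfl (by omega)
      _ ≃' (Fc P i (ki + 1) ⊠ P.μ) :=
        E.tensor (Ehcp_id_left hC _ (by omega)) (Ehcp_id_right hC _ rfl)
      _ ≃' ((Fc P i (ki + 1) ⊠ C.id 2) ⬙ (C.id (i + 1 + (ki + 1 + 1)) ⊠ P.μ)) :=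
        Esplit1 hC (Fc P i (ki + 1)) P.μ
      _ ≃' ((Fc P i (ki + 1) ⊠ C.id 2) ⬙ (C.id (n + 2) ⊠ P.μ)) :=
        Ecl hC (E.tensor (Eid (by omega)) E.rfl)
  have htail : E ((C.id (n + 2) ⊠ P.μ) ⬙ ((C.id n ⊠ P.μ) ⊠ C.id 1))
      ((C.id n ⊠ P.μ) ⊠ P.μ) := by
    calc ((C.id (n + 2) ⊠ P.μ) ⬙ ((C.id n ⊠ P.μ) ⊠ C.id 1))
        ≃' ((C.id (n + 2) ⬙ (C.id n ⊠ P.μ)) ⊠ (P.μ ⬙ C.id 1)) :=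
        Einter hC _ _ _ _ (by omega) rfl (by omega)
      _ ≃' ((C.id n ⊠ P.μ) ⊠ P.μ) :=
        E.tensor (Ehcp_id_left hC _ (by omega)) (Ehcp_id_right hC _ rfl)
  have htail2 : E (((C.id n ⊠ (P.μ ⊠ C.id 1)) ⊠ C.id 1) ⬙ (C.id (n + 1) ⊠ P.μ))
      ((C.id n ⊠ P.μ) ⊠ P.μ) := by
    calc (((C.id n ⊠ (P.μ ⊠ C.id 1)) ⊠ C.id 1) ⬙ (C.id (n + 1) ⊠ P.μ))
        ≃' ((((C.id n ⊠ P.μ) ⊠ C.id 1) ⊠ C.id 1) ⬙ (C.id (n + 1) ⊠ P.μ)) :=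
        Ecr hC (E.tensor (Etensor_assoc hC _ _ _).symm E.rfl)
      _ ≃' (((C.id n ⊠ P.μ) ⊠ C.id (1 + 1)) ⬙ (C.id (n + 1) ⊠ P.μ)) :=
        Ecr hC (Egr2 hC 1 1 _)
      _ ≃' (((C.id n ⊠ P.μ) ⬙ C.id (n + 1)) ⊠ (C.id (1 + 1) ⬙ P.μ)) :=
        Einter hC _ _ _ _ (by omega) (by omega) (by omega)
      _ ≃' ((C.id n ⊠ P.μ) ⊠ P.μ) :=
        E.tensor (Ehcp_id_right hC _ (by omega)) (Ehcp_id_left hC _ (by omega))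
  have hFi12 : E (Fc P i (ki + 1) ⊠ C.id 2)
      ((Fc P i (ki + 2) ⊠ C.id 1) ⬙ ((C.id (n + 1) ⊠ γ 1 1) ⊠ C.id 1)) := by
    calc (Fc P i (ki + 1) ⊠ C.id 2)
        ≃' ((Fc P i (ki + 1) ⊠ C.id 1) ⊠ C.id 1) := (Egr2 hC 1 1 _).symm
      _ ≃' ((Fc P i (ki + 2) ⬙ (C.id (i + 1 + (ki + 1)) ⊠ γ 1 1)) ⊠ C.id 1) :=
        E.tensor (EF3inv P hC i ki) E.rfl
      _ ≃' ((Fc P i (ki + 2) ⊠ C.id 1) ⬙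
          ((C.id (i + 1 + (ki + 1)) ⊠ γ 1 1) ⊠ C.id 1)) := ETR hC 1 _ _ (by omega)
      _ ≃' ((Fc P i (ki + 2) ⊠ C.id 1) ⬙ ((C.id (n + 1) ⊠ γ 1 1) ⊠ C.id 1)) :=
        Ecl hC (E.tensor (E.tensor (Eid (by omega)) E.rfl) E.rfl)
  have hFi2 : E (Fc P i (ki + 2) ⊠ C.id 1)
      (Fc P i (ki + 3) ⬙ (C.id (n + 2) ⊠ γ 1 1)) :=
    (EF3inv P hC i (ki + 1)).trans (Ecl hC (E.tensor (Eid (by omega)) E.rfl))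
  have hFi1' : E (Fc P i (ki + 1) ⊠ C.id 1)
      (Fc P i (ki + 2) ⬙ (C.id (n + 1) ⊠ γ 1 1)) :=
    (EF3inv P hC i ki).trans (Ecl hC (E.tensor (Eid (by omega)) E.rfl))
  have hEF2' : E (Fc P j (kj + 2) ⬙ Fc P i (ki + 3))
      ((Fc P i (ki + 2) ⬙ Fc P j (kj + 3)) ⬙ (C.id (n + 2) ⊠ γ 1 1)) :=
    (EF2 P hC i j (ki + 2) (kj + 2) (by omega)).trans
      (Ecl hC (E.tensor (Eid (by omega)) E.rfl))
  have hGNj : E ((C.id n ⊠ (P.μ ⊠ C.id 1)) ⬙ Fc P j (kj + 2))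
      (Fc P j (kj + 3) ⬙ ((C.id n ⊠ (P.μ ⊠ C.id 1)) ⊠ C.id 1)) := by
    calc ((C.id n ⊠ (P.μ ⊠ C.id 1)) ⬙ Fc P j (kj + 2))
        ≃' ((C.id (j + 1 + kj) ⊠ (P.μ ⊠ C.id 1)) ⬙ Fc P j (kj + 2)) :=
        Ecr hC (E.tensor (Eid (by omega)) E.rfl)
      _ ≃' (Fc P j (kj + 3) ⬙ ((C.id (j + 1 + kj) ⊠ (P.μ ⊠ C.id 1)) ⊠ C.id 1)) :=
        EGN P hC (C.tensor P.μ (C.id 1)) j kj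
      _ ≃' (Fc P j (kj + 3) ⬙ ((C.id n ⊠ (P.μ ⊠ C.id 1)) ⊠ C.id 1)) :=
        Ecl hC (E.tensor (E.tensor (Eid (by omega)) E.rfl) E.rfl)
  have hGNsw : E ((C.id (n + 1) ⊠ γ 1 1) ⬙ Fc P j (kj + 3))
      (Fc P j (kj + 3) ⬙ ((C.id (n + 1) ⊠ γ 1 1) ⊠ C.id 1)) := by
    calc ((C.id (n + 1) ⊠ γ 1 1) ⬙ Fc P j (kj + 3))
        ≃' ((C.id (j + 1 + (kj + 1)) ⊠ γ 1 1) ⬙ Fc P j (kj + 3)) :=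
        Ecr hC (E.tensor (Eid (by omega)) E.rfl)
      _ ≃' (Fc P j (kj + 3) ⬙ ((C.id (j + 1 + (kj + 1)) ⊠ γ 1 1) ⊠ C.id 1)) :=
        EGN P hC (γ 1 1) j (kj + 1)
      _ ≃' (Fc P j (kj + 3) ⬙ ((C.id (n + 1) ⊠ γ 1 1) ⊠ C.id 1)) :=
        Ecl hC (E.tensor (E.tensor (Eid (by omega)) E.rfl) E.rfl)
  have hL : E (Wd C γ P (n + 1) j ⬙ (Wd C γ P n i ⊠ C.id 1))
      ((Fc P i (ki + 2) ⬙ Fc P j (kj + 3)) ⬙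
        (((C.id (n + 1) ⊠ γ 1 1) ⊠ C.id 1) ⬙ ((C.id n ⊠ P.μ) ⊠ P.μ))) := by
    calc (Wd C γ P (n + 1) j ⬙ (Wd C γ P n i ⊠ C.id 1))
        ≃' ((Fc P j (kj + 2) ⬙ (C.id (n + 1) ⊠ P.μ)) ⬙
          ((Fc P i (ki + 1) ⊠ C.id 1) ⬙ ((C.id n ⊠ P.μ) ⊠ C.id 1))) :=
        E.hcp eWj1 hBi
      _ ≃' (Fc P j (kj + 2) ⬙ ((C.id (n + 1) ⊠ P.μ) ⬙
          ((Fc P i (ki + 1) ⊠ C.id 1) ⬙ ((C.id n ⊠ P.μ) ⊠ C.id 1)))) :=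
        EA hC (by omega) (by omega) _ _ _
      _ ≃' (Fc P j (kj + 2) ⬙ (((C.id (n + 1) ⊠ P.μ) ⬙
          (Fc P i (ki + 1) ⊠ C.id 1)) ⬙ ((C.id n ⊠ P.μ) ⊠ C.id 1))) :=
        Ecl hC (EA hC (by omega) (by omega) _ _ _).symm
      _ ≃' (Fc P j (kj + 2) ⬙ (((Fc P i (ki + 1) ⊠ C.id 2) ⬙
          (C.id (n + 2) ⊠ P.μ)) ⬙ ((C.id n ⊠ P.μ) ⊠ C.id 1))) := Ecl hC (Ecr hC hC1)
      _ ≃' (Fc P j (kj + 2) ⬙ ((Fc P i (ki + 1) ⊠ C.id 2) ⬙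
          ((C.id (n + 2) ⊠ P.μ) ⬙ ((C.id n ⊠ P.μ) ⊠ C.id 1)))) :=
        Ecl hC (EA hC (by omega) (by omega) _ _ _)
      _ ≃' (Fc P j (kj + 2) ⬙ ((Fc P i (ki + 1) ⊠ C.id 2) ⬙
          ((C.id n ⊠ P.μ) ⊠ P.μ))) := Ecl hC (Ecl hC htail)
      _ ≃' (Fc P j (kj + 2) ⬙ (((Fc P i (ki + 2) ⊠ C.id 1) ⬙
          ((C.id (n + 1) ⊠ γ 1 1) ⊠ C.id 1)) ⬙ ((C.id n ⊠ P.μ) ⊠ P.μ))) :=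
        Ecl hC (Ecr hC hFi12)
      _ ≃' (Fc P j (kj + 2) ⬙ ((Fc P i (ki + 2) ⊠ C.id 1) ⬙
          (((C.id (n + 1) ⊠ γ 1 1) ⊠ C.id 1) ⬙ ((C.id n ⊠ P.μ) ⊠ P.μ)))) :=
        Ecl hC (EA hC (by omega) (by omega) _ _ _)
      _ ≃' (Fc P j (kj + 2) ⬙ ((Fc P i (ki + 3) ⬙ (C.id (n + 2) ⊠ γ 1 1)) ⬙
          (((C.id (n + 1) ⊠ γ 1 1) ⊠ C.id 1) ⬙ ((C.id n ⊠ P.μ) ⊠ P.μ)))) :=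
        Ecl hC (Ecr hC hFi2)
      _ ≃' (Fc P j (kj + 2) ⬙ (Fc P i (ki + 3) ⬙ ((C.id (n + 2) ⊠ γ 1 1) ⬙
          (((C.id (n + 1) ⊠ γ 1 1) ⊠ C.id 1) ⬙ ((C.id n ⊠ P.μ) ⊠ P.μ))))) :=
        Ecl hC (EA hC (by omega) (by omega) _ _ _)
      _ ≃' ((Fc P j (kj + 2) ⬙ Fc P i (ki + 3)) ⬙ ((C.id (n + 2) ⊠ γ 1 1) ⬙
          (((C.id (n + 1) ⊠ γ 1 1) ⊠ C.id 1) ⬙ ((C.id n ⊠ P.μ) ⊠ P.μ)))) :=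
        (EA hC (by omega) (by omega) _ _ _).symm
      _ ≃' (((Fc P i (ki + 2) ⬙ Fc P j (kj + 3)) ⬙ (C.id (n + 2) ⊠ γ 1 1)) ⬙
          ((C.id (n + 2) ⊠ γ 1 1) ⬙ (((C.id (n + 1) ⊠ γ 1 1) ⊠ C.id 1) ⬙
            ((C.id n ⊠ P.μ) ⊠ P.μ)))) := Ecr hC hEF2'
      _ ≃' ((Fc P i (ki + 2) ⬙ Fc P j (kj + 3)) ⬙ ((C.id (n + 2) ⊠ γ 1 1) ⬙
          ((C.id (n + 2) ⊠ γ 1 1) ⬙ (((C.id (n + 1) ⊠ γ 1 1) ⊠ C.id 1) ⬙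
            ((C.id n ⊠ P.μ) ⊠ P.μ))))) := EA hC (by omega) (by omega) _ _ _
      _ ≃' ((Fc P i (ki + 2) ⬙ Fc P j (kj + 3)) ⬙ (((C.id (n + 2) ⊠ γ 1 1) ⬙
          (C.id (n + 2) ⊠ γ 1 1)) ⬙ (((C.id (n + 1) ⊠ γ 1 1) ⊠ C.id 1) ⬙
            ((C.id n ⊠ P.μ) ⊠ P.μ)))) :=
        Ecl hC (EA hC (by omega) (by omega) _ _ _).symm
      _ ≃' ((Fc P i (ki + 2) ⬙ Fc P j (kj + 3)) ⬙ (C.id (n + 2 + 2) ⬙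
          (((C.id (n + 1) ⊠ γ 1 1) ⊠ C.id 1) ⬙ ((C.id n ⊠ P.μ) ⊠ P.μ)))) :=
        Ecl hC (Ecr hC (Eswap2 hC (n + 2)))
      _ ≃' ((Fc P i (ki + 2) ⬙ Fc P j (kj + 3)) ⬙
          (((C.id (n + 1) ⊠ γ 1 1) ⊠ C.id 1) ⬙ ((C.id n ⊠ P.μ) ⊠ P.μ))) :=
        Ecl hC (Ehcp_id_left hC _ (by omega))
  have hR : E ((Wd C γ P n i ⊠ C.id 1) ⬙ Wd C γ P (n + 1) j)
      ((Fc P i (ki + 2) ⬙ Fc P j (kj + 3)) ⬙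
        (((C.id (n + 1) ⊠ γ 1 1) ⊠ C.id 1) ⬙ ((C.id n ⊠ P.μ) ⊠ P.μ))) := by
    calc ((Wd C γ P n i ⊠ C.id 1) ⬙ Wd C γ P (n + 1) j)
        ≃' (((Fc P i (ki + 1) ⊠ C.id 1) ⬙ ((C.id n ⊠ P.μ) ⊠ C.id 1)) ⬙
          (Fc P j (kj + 2) ⬙ (C.id (n + 1) ⊠ P.μ))) := E.hcp hBi eWj1
      _ ≃' ((Fc P i (ki + 1) ⊠ C.id 1) ⬙ (((C.id n ⊠ P.μ) ⊠ C.id 1) ⬙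
          (Fc P j (kj + 2) ⬙ (C.id (n + 1) ⊠ P.μ)))) :=
        EA hC (by omega) (by omega) _ _ _
      _ ≃' ((Fc P i (ki + 1) ⊠ C.id 1) ⬙ ((C.id n ⊠ (P.μ ⊠ C.id 1)) ⬙
          (Fc P j (kj + 2) ⬙ (C.id (n + 1) ⊠ P.μ)))) :=
        Ecl hC (Ecr hC (Etensor_assoc hC _ _ _))
      _ ≃' ((Fc P i (ki + 1) ⊠ C.id 1) ⬙ (((C.id n ⊠ (P.μ ⊠ C.id 1)) ⬙
          Fc P j (kj + 2)) ⬙ (C.id (n + 1) ⊠ P.μ))) :=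
        Ecl hC (EA hC (by omega) (by omega) _ _ _).symm
      _ ≃' ((Fc P i (ki + 1) ⊠ C.id 1) ⬙ ((Fc P j (kj + 3) ⬙
          ((C.id n ⊠ (P.μ ⊠ C.id 1)) ⊠ C.id 1)) ⬙ (C.id (n + 1) ⊠ P.μ))) :=
        Ecl hC (Ecr hC hGNj)
      _ ≃' ((Fc P i (ki + 1) ⊠ C.id 1) ⬙ (Fc P j (kj + 3) ⬙
          (((C.id n ⊠ (P.μ ⊠ C.id 1)) ⊠ C.id 1) ⬙ (C.id (n + 1) ⊠ P.μ)))) :=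
        Ecl hC (EA hC (by omega) (by omega) _ _ _)
      _ ≃' ((Fc P i (ki + 1) ⊠ C.id 1) ⬙ (Fc P j (kj + 3) ⬙
          ((C.id n ⊠ P.μ) ⊠ P.μ))) := Ecl hC (Ecl hC htail2)
      _ ≃' ((Fc P i (ki + 2) ⬙ (C.id (n + 1) ⊠ γ 1 1)) ⬙ (Fc P j (kj + 3) ⬙
          ((C.id n ⊠ P.μ) ⊠ P.μ))) := Ecr hC hFi1'
      _ ≃' (Fc P i (ki + 2) ⬙ ((C.id (n + 1) ⊠ γ 1 1) ⬙ (Fc P j (kj + 3) ⬙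
          ((C.id n ⊠ P.μ) ⊠ P.μ)))) := EA hC (by omega) (by omega) _ _ _
      _ ≃' (Fc P i (ki + 2) ⬙ (((C.id (n + 1) ⊠ γ 1 1) ⬙ Fc P j (kj + 3)) ⬙
          ((C.id n ⊠ P.μ) ⊠ P.μ))) := Ecl hC (EA hC (by omega) (by omega) _ _ _).symm
      _ ≃' (Fc P i (ki + 2) ⬙ ((Fc P j (kj + 3) ⬙ ((C.id (n + 1) ⊠ γ 1 1) ⊠ C.id 1)) ⬙
          ((C.id n ⊠ P.μ) ⊠ P.μ))) := Ecl hC (Ecr hC hGNsw)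
      _ ≃' (Fc P i (ki + 2) ⬙ (Fc P j (kj + 3) ⬙ (((C.id (n + 1) ⊠ γ 1 1) ⊠ C.id 1) ⬙
          ((C.id n ⊠ P.μ) ⊠ P.μ)))) := Ecl hC (EA hC (by omega) (by omega) _ _ _)
      _ ≃' ((Fc P i (ki + 2) ⬙ Fc P j (kj + 3)) ⬙ (((C.id (n + 1) ⊠ γ 1 1) ⊠ C.id 1) ⬙
          ((C.id n ⊠ P.μ) ⊠ P.μ))) := (EA hC (by omega) (by omega) _ _ _).symm
  exact hL.trans hR.symm

end DevP

section Fold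
variable {C : MonCatN} {γ : ∀ m n : ℕ, C.Hom (m + n) (n + m)}
variable (hC : IsStrictSymMon C γ)

/-- composite of a list of endomorphisms -/
def cmpL {u : ℕ} (f : ℕ → C.Hom u u) (l : List ℕ) : C.Hom u u :=
  l.foldl (fun g i => C.comp g (f i)) (C.id u)

include hC

theorem foldl_acc {u : ℕ} (f : ℕ → C.Hom u u) (l : List ℕ) (acc : C.Hom u u) :
    l.foldl (fun g i => C.comp g (f i)) acc = C.comp acc (cmpL f l) := by
  induction l generalizing acc with
  | nil => exact (hC.comp_id acc).symm
  | cons a l ih =>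
    show List.foldl _ (C.comp acc (f a)) l = _
    have h2 : cmpL f (a :: l) = C.comp (C.comp (C.id u) (f a)) (cmpL f l) := by
      show List.foldl _ (C.comp (C.id u) (f a)) l = _
      exact ih _
    rw [ih, h2, hC.id_comp, hC.comp_assoc]

theorem cmpL_cons {u : ℕ} (f : ℕ → C.Hom u u) (a : ℕ) (l : List ℕ) :
    cmpL f (a :: l) = C.comp (f a) (cmpL f l) := by
  show List.foldl _ _ (a :: l) = _
  rw [List.foldl_cons, foldl_acc hC, hC.id_comp]

theorem foldl_exch {u v : ℕ} (Φ : C.Hom u v) (f : ℕ → C.Hom u u)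
    (g : ℕ → C.Hom v v) (l : List ℕ)
    (hfg : ∀ i ∈ l, C.comp (f i) Φ = C.comp Φ (g i)) :
    C.comp (cmpL f l) Φ = C.comp Φ (cmpL g l) := by
  induction l with
  | nil => show C.comp (C.id u) Φ = C.comp Φ (C.id v); rw [hC.id_comp, hC.comp_id]
  | cons a l ih =>
    rw [cmpL_cons hC, cmpL_cons hC, hC.comp_assoc,
      ih (fun i hi => hfg i (List.mem_cons_of_mem a hi)), ← hC.comp_assoc,
      hfg a List.mem_cons_self, hC.comp_assoc]

theorem cmpL_tensor {u : ℕ} (f : ℕ → C.Hom u u) (l : List ℕ) :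
    C.tensor (cmpL f l) (C.id 1) = cmpL (fun i => C.tensor (f i) (C.id 1)) l := by
  induction l with
  | nil => exact hC.tensor_id u 1
  | cons a l ih =>
    rw [cmpL_cons hC, cmpL_cons hC, ← ih]
    have h2 := hC.tensor_comp (f a) (cmpL f l) (C.id 1) (C.id 1)
    rw [hC.id_comp (C.id 1)] at h2
    exact h2

end Fold

section Assemble
variable {C : MonCatN} {γ : ∀ m n : ℕ, C.Hom (m + n) (n + m)}
variable (P : PoalgebraIn C γ) (hC : IsStrictSymMon C γ)
include hC

theorem WId_eq (n : ℕ) (I : Finset ℕ) :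
    WId C γ P n I = cmpL (fun i => Wd C γ P n i) (I.sort (· ≤ ·)) := rfl

/-- fold of L1 -/
theorem EM1 (n : ℕ) (I : Finset ℕ) (hI : ∀ a ∈ I, a < n) :
    C.comp (WId C γ P n I) (C.tensor (C.tensor (C.id n) P.η) (C.id 1)) =
      C.comp (C.tensor (C.tensor (C.id n) P.η) (C.id 1)) (WId C γ P (n + 1) I) := by
  rw [WId_eq P hC, WId_eq P hC]
  refine foldl_exch hC _ _ _ _ ?_
  intro i hi
  have hin : i < n := hI i ((Finset.mem_sort _).mp hi)
  have := EL1 P hC n i hin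
  exact ((E.hcp_comp _ _ rfl).symm.trans (this.trans (E.hcp_comp _ _ rfl))).eq

/-- fold of L2 -/
theorem EM2 (n : ℕ) (I : Finset ℕ) (hI : ∀ a ∈ I, a < n) :
    C.comp (WId C γ P (n + 1) I) (Gd C γ n) =
      C.comp (Gd C γ n)
        (C.tensor (WId C γ P n I) (C.id 1) : C.Hom (n + 1 + 1) (n + 1 + 1)) := by
  rw [WId_eq P hC (n + 1) I, WId_eq P hC n I, cmpL_tensor hC]
  refine foldl_exch hC _ _ _ _ ?_
  intro i hi
  have hin : i < n := hI i ((Finset.mem_sort _).mp hi)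
  have := EL2 P hC n i hin
  exact ((E.hcp_comp _ _ rfl).symm.trans (this.trans (E.hcp_comp _ _ rfl))).eq

/-- fold of L6, one side folded -/
theorem EM3 (n j : ℕ) (I : Finset ℕ) (hI : ∀ a ∈ I, a < n) (hj : j < n) :
    C.comp (WId C γ P (n + 1) I) (C.tensor (Wd C γ P n j) (C.id 1)) =
      C.comp (C.tensor (Wd C γ P n j) (C.id 1)) (WId C γ P (n + 1) I) := by
  rw [WId_eq P hC (n + 1) I]
  refine foldl_exch hC _ _ _ _ ?_
  intro i hi
  have hin : i < n := hI i ((Finset.mem_sort _).mp hi)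
  have := EL6 P hC n j i hj hin
  exact ((E.hcp_comp _ _ rfl).symm.trans (this.trans (E.hcp_comp _ _ rfl))).eq

/-- fold of L6, both sides folded -/
theorem EM4 (n : ℕ) (I J : Finset ℕ) (hI : ∀ a ∈ I, a < n) (hJ : ∀ a ∈ J, a < n) :
    C.comp (WId C γ P (n + 1) I)
        (C.tensor (WId C γ P n J) (C.id 1) : C.Hom (n + 1 + 1) (n + 1 + 1)) =
      C.comp (C.tensor (WId C γ P n J) (C.id 1) : C.Hom (n + 1 + 1) (n + 1 + 1))
        (WId C γ P (n + 1) I) := by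
  rw [WId_eq P hC n J, cmpL_tensor hC]
  refine (foldl_exch hC _ _ _ _ ?_).symm
  intro j hj
  exact (EM3 P hC n j I hI (hJ j ((Finset.mem_sort _).mp hj))).symm

theorem Ecomp2 {a b c d : ℕ} (f : C.Hom a b) (g : C.Hom b c) (h : C.Hom c d) :
    E (C.comp f (C.comp g h)) (hcp f (hcp g h rfl) rfl) :=
  (E.hcp_comp _ _ rfl).symm.trans (Ecl hC (E.hcp_comp _ _ rfl).symm)

theorem hXdef (n : ℕ) (K : Finset ℕ) :
    E (Xd C γ P n K) (Hd C γ P n ⬙ (WId C γ P n K ⬙ Sd C γ P n)) :=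
  Ecomp2 hC _ _ _

theorem hSH (n : ℕ) : E (Sd C γ P n ⬙ (Hd C γ P n ⊠ C.id 1))
    ((Hd C γ P n ⊠ C.id 1) ⬙ Sd C γ P (n + 1)) := by
  have i1 : E (P.σ ⬙ (P.η ⊠ C.id 1)) ((P.η ⊠ C.id 1) ⬙ (C.id 1 ⊠ P.σ)) := by
    calc (P.σ ⬙ (P.η ⊠ C.id 1))
        ≃' ((C.id 0 ⊠ P.σ) ⬙ (P.η ⊠ C.id 1)) := Ecr hC (Eunit_l hC P.σ).symm
      _ ≃' (P.η ⊠ P.σ) := (Esplit2 hC P.η P.σ).symm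
      _ ≃' ((P.η ⊠ C.id 1) ⬙ (C.id 1 ⊠ P.σ)) := Esplit1 hC P.η P.σ
  calc (Sd C γ P n ⬙ (Hd C γ P n ⊠ C.id 1))
      ≃' ((C.id n ⊠ P.σ) ⬙ (C.id n ⊠ (P.η ⊠ C.id 1))) :=
      Ecl hC (Etensor_assoc hC _ _ _)
    _ ≃' (C.id n ⊠ (P.σ ⬙ (P.η ⊠ C.id 1))) := (ETL hC n _ _ (by omega)).symm
    _ ≃' (C.id n ⊠ ((P.η ⊠ C.id 1) ⬙ (C.id 1 ⊠ P.σ))) := E.tensor E.rfl i1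
    _ ≃' ((C.id n ⊠ (P.η ⊠ C.id 1)) ⬙ (C.id n ⊠ (C.id 1 ⊠ P.σ))) :=
      ETL hC n _ _ (by omega)
    _ ≃' ((Hd C γ P n ⊠ C.id 1) ⬙ Sd C γ P (n + 1)) :=
      E.hcp (Etensor_assoc hC _ _ _).symm (Egr1 hC n 1 P.σ)

theorem hSW (n : ℕ) (X : C.Hom (n + 1) (n + 1)) :
    E (Sd C γ P (n + 1) ⬙ (X ⊠ C.id 1)) ((X ⊠ C.id 1) ⬙ Sd C γ P (n + 1)) :=
  (Edisj hC X P.σ).symm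

theorem hGS (n : ℕ) : E (Gd C γ n ⬙ Sd C γ P (n + 1))
    ((Sd C γ P n ⊠ C.id 1) ⬙ Gd C γ n) := by
  calc (Gd C γ n ⬙ Sd C γ P (n + 1))
      ≃' ((C.id n ⊠ γ 1 1) ⬙ (C.id n ⊠ (C.id 1 ⊠ P.σ))) :=
      Ecl hC (Egr1 hC n 1 P.σ).symm
    _ ≃' (C.id n ⊠ (γ 1 1 ⬙ (C.id 1 ⊠ P.σ))) := (ETL hC n _ _ (by omega)).symm
    _ ≃' (C.id n ⊠ ((P.σ ⊠ C.id 1) ⬙ γ 1 1)) :=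
      E.tensor E.rfl (Enat hC P.σ (C.id 1)).symm
    _ ≃' ((C.id n ⊠ (P.σ ⊠ C.id 1)) ⬙ (C.id n ⊠ γ 1 1)) := ETL hC n _ _ (by omega)
    _ ≃' ((Sd C γ P n ⊠ C.id 1) ⬙ Gd C γ n) :=
      Ecr hC (Etensor_assoc hC _ _ _).symm

theorem hGS2 (n : ℕ) : E (Gd C γ n ⬙ (Sd C γ P n ⊠ C.id 1))
    (Sd C γ P (n + 1) ⬙ Gd C γ n) := by
  calc (Gd C γ n ⬙ (Sd C γ P n ⊠ C.id 1))
      ≃' ((C.id n ⊠ γ 1 1) ⬙ (C.id n ⊠ (P.σ ⊠ C.id 1))) :=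
      Ecl hC (Etensor_assoc hC _ _ _)
    _ ≃' (C.id n ⊠ (γ 1 1 ⬙ (P.σ ⊠ C.id 1))) := (ETL hC n _ _ (by omega)).symm
    _ ≃' (C.id n ⊠ ((C.id 1 ⊠ P.σ) ⬙ γ 1 1)) :=
      E.tensor E.rfl (Enat hC (C.id 1) P.σ).symm
    _ ≃' ((C.id n ⊠ (C.id 1 ⊠ P.σ)) ⬙ (C.id n ⊠ γ 1 1)) := ETL hC n _ _ (by omega)
    _ ≃' (Sd C γ P (n + 1) ⬙ Gd C γ n) := Ecr hC (Egr1 hC n 1 P.σ)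

omit P in
theorem hGG (n : ℕ) : E (Gd C γ n ⬙ Gd C γ n) (C.id (n + 2)) := Eswap2 hC n

theorem hHG (n : ℕ) : E (Hd C γ P (n + 1) ⬙ Gd C γ n) (Hd C γ P n ⊠ C.id 1) := by
  have i1 : E ((C.id 1 ⊠ P.η) ⬙ γ 1 1) (P.η ⊠ C.id 1) := by
    calc ((C.id 1 ⊠ P.η) ⬙ γ 1 1)
        ≃' (γ 1 0 ⬙ (P.η ⊠ C.id 1)) := Enat hC (C.id 1) P.η
      _ ≃' (C.id 1 ⬙ (P.η ⊠ C.id 1)) := Ecr hC (Egamma0r hC 1)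
      _ ≃' (P.η ⊠ C.id 1) := Ehcp_id_left hC _ rfl
  calc (Hd C γ P (n + 1) ⬙ Gd C γ n)
      ≃' ((C.id n ⊠ (C.id 1 ⊠ P.η)) ⬙ (C.id n ⊠ γ 1 1)) :=
      Ecr hC (Egr1 hC n 1 P.η).symm
    _ ≃' (C.id n ⊠ ((C.id 1 ⊠ P.η) ⬙ γ 1 1)) := (ETL hC n _ _ (by omega)).symm
    _ ≃' (C.id n ⊠ (P.η ⊠ C.id 1)) := E.tensor E.rfl i1
    _ ≃' (Hd C γ P n ⊠ C.id 1) := (Etensor_assoc hC _ _ _).symm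

theorem hHH (n : ℕ) : E ((Hd C γ P n ⬙ (Hd C γ P n ⊠ C.id 1)) ⬙ Gd C γ n)
    (Hd C γ P n ⬙ (Hd C γ P n ⊠ C.id 1)) := by
  have i0 : E (P.η ⬙ (P.η ⊠ C.id 1)) (P.η ⊠ P.η) := by
    calc (P.η ⬙ (P.η ⊠ C.id 1))
        ≃' ((C.id 0 ⊠ P.η) ⬙ (P.η ⊠ C.id 1)) := Ecr hC (Eunit_l hC P.η).symm
      _ ≃' (P.η ⊠ P.η) := (Esplit2 hC P.η P.η).symm
  have i1 : E (Hd C γ P n ⬙ (Hd C γ P n ⊠ C.id 1)) (C.id n ⊠ (P.η ⊠ P.η)) := by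
    calc (Hd C γ P n ⬙ (Hd C γ P n ⊠ C.id 1))
        ≃' ((C.id n ⊠ P.η) ⬙ (C.id n ⊠ (P.η ⊠ C.id 1))) :=
        Ecl hC (Etensor_assoc hC _ _ _)
      _ ≃' (C.id n ⊠ (P.η ⬙ (P.η ⊠ C.id 1))) := (ETL hC n _ _ (by omega)).symm
      _ ≃' (C.id n ⊠ (P.η ⊠ P.η)) := E.tensor E.rfl i0
  have i2 : E ((P.η ⊠ P.η) ⬙ γ 1 1) (P.η ⊠ P.η) := by
    calc ((P.η ⊠ P.η) ⬙ γ 1 1)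
        ≃' (γ 0 0 ⬙ (P.η ⊠ P.η)) := Enat hC P.η P.η
      _ ≃' (C.id 0 ⬙ (P.η ⊠ P.η)) := Ecr hC (Egamma0l hC 0)
      _ ≃' (P.η ⊠ P.η) := Ehcp_id_left hC _ rfl
  calc ((Hd C γ P n ⬙ (Hd C γ P n ⊠ C.id 1)) ⬙ Gd C γ n)
      ≃' ((C.id n ⊠ (P.η ⊠ P.η)) ⬙ (C.id n ⊠ γ 1 1)) := Ecr hC i1
    _ ≃' (C.id n ⊠ ((P.η ⊠ P.η) ⬙ γ 1 1)) := (ETL hC n _ _ (by omega)).symm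
    _ ≃' (C.id n ⊠ (P.η ⊠ P.η)) := E.tensor E.rfl i2
    _ ≃' (Hd C γ P n ⬙ (Hd C γ P n ⊠ C.id 1)) := i1.symm

theorem hAG (n : ℕ) (K : Finset ℕ) (hK : ∀ a ∈ K, a < n) :
    E (WId C γ P (n + 1) K ⬙ Gd C γ n)
      (Gd C γ n ⬙ (WId C γ P n K ⊠ C.id 1)) :=
  (E.hcp_comp _ _ rfl).trans ((E.of_eq (EM2 P hC n K hK)).trans
    (E.hcp_comp _ _ rfl).symm)

theorem hGA (n : ℕ) (K : Finset ℕ) (hK : ∀ a ∈ K, a < n) :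
    E (Gd C γ n ⬙ WId C γ P (n + 1) K)
      ((WId C γ P n K ⊠ C.id 1) ⬙ Gd C γ n) := by
  calc (Gd C γ n ⬙ WId C γ P (n + 1) K)
      ≃' (Gd C γ n ⬙ (WId C γ P (n + 1) K ⬙ C.id (n + 2))) :=
      Ecl hC (Ehcp_id_right hC _ (by omega)).symm
    _ ≃' (Gd C γ n ⬙ (WId C γ P (n + 1) K ⬙ (Gd C γ n ⬙ Gd C γ n))) :=
      Ecl hC (Ecl hC (hGG hC n).symm)
    _ ≃' (Gd C γ n ⬙ ((WId C γ P (n + 1) K ⬙ Gd C γ n) ⬙ Gd C γ n)) :=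
      Ecl hC (EA hC (by omega) (by omega) _ _ _).symm
    _ ≃' (Gd C γ n ⬙ ((Gd C γ n ⬙ (WId C γ P n K ⊠ C.id 1)) ⬙ Gd C γ n)) :=
      Ecl hC (Ecr hC (hAG P hC n K hK))
    _ ≃' (Gd C γ n ⬙ (Gd C γ n ⬙ ((WId C γ P n K ⊠ C.id 1) ⬙ Gd C γ n))) :=
      Ecl hC (EA hC (by omega) (by omega) _ _ _)
    _ ≃' ((Gd C γ n ⬙ Gd C γ n) ⬙ ((WId C γ P n K ⊠ C.id 1) ⬙ Gd C γ n)) :=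
      (EA hC (by omega) (by omega) _ _ _).symm
    _ ≃' (C.id (n + 2) ⬙ ((WId C γ P n K ⊠ C.id 1) ⬙ Gd C γ n)) :=
      Ecr hC (hGG hC n)
    _ ≃' ((WId C γ P n K ⊠ C.id 1) ⬙ Gd C γ n) := Ehcp_id_left hC _ (by omega)

theorem hGT (n : ℕ) :
    E (Gd C γ n ⬙ (Sd C γ P (n + 1) ⬙ (Sd C γ P n ⊠ C.id 1)))
      ((Sd C γ P (n + 1) ⬙ (Sd C γ P n ⊠ C.id 1)) ⬙ Gd C γ n) := by
  calc (Gd C γ n ⬙ (Sd C γ P (n + 1) ⬙ (Sd C γ P n ⊠ C.id 1)))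
      ≃' ((Gd C γ n ⬙ Sd C γ P (n + 1)) ⬙ (Sd C γ P n ⊠ C.id 1)) :=
      (EA hC (by omega) (by omega) _ _ _).symm
    _ ≃' (((Sd C γ P n ⊠ C.id 1) ⬙ Gd C γ n) ⬙ (Sd C γ P n ⊠ C.id 1)) :=
      Ecr hC (hGS P hC n)
    _ ≃' ((Sd C γ P n ⊠ C.id 1) ⬙ (Gd C γ n ⬙ (Sd C γ P n ⊠ C.id 1))) :=
      EA hC (by omega) (by omega) _ _ _
    _ ≃' ((Sd C γ P n ⊠ C.id 1) ⬙ (Sd C γ P (n + 1) ⬙ Gd C γ n)) :=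
      Ecl hC (hGS2 P hC n)
    _ ≃' (((Sd C γ P n ⊠ C.id 1) ⬙ Sd C γ P (n + 1)) ⬙ Gd C γ n) :=
      (EA hC (by omega) (by omega) _ _ _).symm
    _ ≃' ((Sd C γ P (n + 1) ⬙ (Sd C γ P n ⊠ C.id 1)) ⬙ Gd C γ n) :=
      Ecr hC (hSW P hC n (Sd C γ P n)).symm

theorem hdagger (n : ℕ) (K : Finset ℕ) (hK : ∀ a ∈ K, a < n) :
    E (Xd C γ P (n + 1) K) ((Xd C γ P n K ⊠ C.id 1) ⬙ Gd C γ n) := by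
  have hS1 : E (Sd C γ P (n + 1)) ((Gd C γ n ⬙ Gd C γ n) ⬙ Sd C γ P (n + 1)) :=
    (Ehcp_id_left hC _ (by omega)).symm.trans (Ecr hC (hGG hC n).symm)
  have hM1E : E (WId C γ P (n + 1) K ⬙ Gd C γ n)
      (Gd C γ n ⬙ (WId C γ P n K ⊠ C.id 1)) := hAG P hC n K hK
  calc Xd C γ P (n + 1) K
      ≃' (Hd C γ P (n + 1) ⬙ (WId C γ P (n + 1) K ⬙ Sd C γ P (n + 1))) :=
      hXdef P hC (n + 1) K
    _ ≃' (Hd C γ P (n + 1) ⬙ (WId C γ P (n + 1) K ⬙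
        ((Gd C γ n ⬙ Gd C γ n) ⬙ Sd C γ P (n + 1)))) := Ecl hC (Ecl hC hS1)
    _ ≃' (Hd C γ P (n + 1) ⬙ (WId C γ P (n + 1) K ⬙
        (Gd C γ n ⬙ (Gd C γ n ⬙ Sd C γ P (n + 1))))) :=
      Ecl hC (Ecl hC (EA hC (by omega) (by omega) _ _ _))
    _ ≃' (Hd C γ P (n + 1) ⬙ ((WId C γ P (n + 1) K ⬙ Gd C γ n) ⬙
        (Gd C γ n ⬙ Sd C γ P (n + 1)))) :=
      Ecl hC (EA hC (by omega) (by omega) _ _ _).symm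
    _ ≃' (Hd C γ P (n + 1) ⬙ ((Gd C γ n ⬙ (WId C γ P n K ⊠ C.id 1)) ⬙
        ((Sd C γ P n ⊠ C.id 1) ⬙ Gd C γ n))) := Ecl hC (E.hcp hM1E (hGS P hC n))
    _ ≃' (Hd C γ P (n + 1) ⬙ (Gd C γ n ⬙ ((WId C γ P n K ⊠ C.id 1) ⬙
        ((Sd C γ P n ⊠ C.id 1) ⬙ Gd C γ n)))) :=
      Ecl hC (EA hC (by omega) (by omega) _ _ _)
    _ ≃' ((Hd C γ P (n + 1) ⬙ Gd C γ n) ⬙ ((WId C γ P n K ⊠ C.id 1) ⬙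
        ((Sd C γ P n ⊠ C.id 1) ⬙ Gd C γ n))) :=
      (EA hC (by omega) (by omega) _ _ _).symm
    _ ≃' ((Hd C γ P n ⊠ C.id 1) ⬙ ((WId C γ P n K ⊠ C.id 1) ⬙
        ((Sd C γ P n ⊠ C.id 1) ⬙ Gd C γ n))) := Ecr hC (hHG P hC n)
    _ ≃' ((Hd C γ P n ⊠ C.id 1) ⬙ (((WId C γ P n K ⊠ C.id 1) ⬙
        (Sd C γ P n ⊠ C.id 1)) ⬙ Gd C γ n)) :=
      Ecl hC (EA hC (by omega) (by omega) _ _ _).symm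
    _ ≃' ((Hd C γ P n ⊠ C.id 1) ⬙ (((WId C γ P n K ⬙ Sd C γ P n) ⊠ C.id 1) ⬙
        Gd C γ n)) := Ecl hC (Ecr hC (ETR hC 1 _ _ (by omega)).symm)
    _ ≃' (((Hd C γ P n ⊠ C.id 1) ⬙ ((WId C γ P n K ⬙ Sd C γ P n) ⊠ C.id 1)) ⬙
        Gd C γ n) := (EA hC (by omega) (by omega) _ _ _).symm
    _ ≃' (((Hd C γ P n ⬙ (WId C γ P n K ⬙ Sd C γ P n)) ⊠ C.id 1) ⬙ Gd C γ n) :=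
      Ecr hC (ETR hC 1 _ _ (by omega)).symm
    _ ≃' ((Xd C γ P n K ⊠ C.id 1) ⬙ Gd C γ n) :=
      Ecr hC (E.tensor (hXdef P hC n K).symm E.rfl)

theorem hexp (n : ℕ) (K1 K2 : Finset ℕ) (hK1 : ∀ a ∈ K1, a < n) :
    E (Xd C γ P n K1 ⬙ (Xd C γ P n K2 ⊠ C.id 1))
      (Hd C γ P n ⬙ ((Hd C γ P n ⊠ C.id 1) ⬙ (WId C γ P (n + 1) K1 ⬙
        ((WId C γ P n K2 ⊠ C.id 1) ⬙
          (Sd C γ P (n + 1) ⬙ (Sd C γ P n ⊠ C.id 1)))))) := by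
  have hM1E : E (WId C γ P n K1 ⬙ (Hd C γ P n ⊠ C.id 1))
      ((Hd C γ P n ⊠ C.id 1) ⬙ WId C γ P (n + 1) K1) :=
    (E.hcp_comp _ _ rfl).trans ((E.of_eq (EM1 P hC n K1 hK1)).trans
      (E.hcp_comp _ _ rfl).symm)
  have hX2 : E (Xd C γ P n K2 ⊠ C.id 1)
      ((Hd C γ P n ⊠ C.id 1) ⬙ ((WId C γ P n K2 ⊠ C.id 1) ⬙
        (Sd C γ P n ⊠ C.id 1))) := by
    calc (Xd C γ P n K2 ⊠ C.id 1)
        ≃' ((Hd C γ P n ⬙ (WId C γ P n K2 ⬙ Sd C γ P n)) ⊠ C.id 1) :=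
        E.tensor (hXdef P hC n K2) E.rfl
      _ ≃' ((Hd C γ P n ⊠ C.id 1) ⬙ ((WId C γ P n K2 ⬙ Sd C γ P n) ⊠ C.id 1)) :=
        ETR hC 1 _ _ (by omega)
      _ ≃' ((Hd C γ P n ⊠ C.id 1) ⬙ ((WId C γ P n K2 ⊠ C.id 1) ⬙
          (Sd C γ P n ⊠ C.id 1))) := Ecl hC (ETR hC 1 _ _ (by omega))
  calc (Xd C γ P n K1 ⬙ (Xd C γ P n K2 ⊠ C.id 1))
      ≃' ((Hd C γ P n ⬙ (WId C γ P n K1 ⬙ Sd C γ P n)) ⬙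
        ((Hd C γ P n ⊠ C.id 1) ⬙ ((WId C γ P n K2 ⊠ C.id 1) ⬙
          (Sd C γ P n ⊠ C.id 1)))) := E.hcp (hXdef P hC n K1) hX2
    _ ≃' (Hd C γ P n ⬙ ((WId C γ P n K1 ⬙ Sd C γ P n) ⬙
        ((Hd C γ P n ⊠ C.id 1) ⬙ ((WId C γ P n K2 ⊠ C.id 1) ⬙
          (Sd C γ P n ⊠ C.id 1))))) := EA hC (by omega) (by omega) _ _ _
    _ ≃' (Hd C γ P n ⬙ (WId C γ P n K1 ⬙ (Sd C γ P n ⬙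
        ((Hd C γ P n ⊠ C.id 1) ⬙ ((WId C γ P n K2 ⊠ C.id 1) ⬙
          (Sd C γ P n ⊠ C.id 1)))))) := Ecl hC (EA hC (by omega) (by omega) _ _ _)
    _ ≃' (Hd C γ P n ⬙ (WId C γ P n K1 ⬙ ((Sd C γ P n ⬙
        (Hd C γ P n ⊠ C.id 1)) ⬙ ((WId C γ P n K2 ⊠ C.id 1) ⬙
          (Sd C γ P n ⊠ C.id 1))))) :=
      Ecl hC (Ecl hC (EA hC (by omega) (by omega) _ _ _).symm)
    _ ≃' (Hd C γ P n ⬙ (WId C γ P n K1 ⬙ (((Hd C γ P n ⊠ C.id 1) ⬙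
        Sd C γ P (n + 1)) ⬙ ((WId C γ P n K2 ⊠ C.id 1) ⬙
          (Sd C γ P n ⊠ C.id 1))))) := Ecl hC (Ecl hC (Ecr hC (hSH P hC n)))
    _ ≃' (Hd C γ P n ⬙ (WId C γ P n K1 ⬙ ((Hd C γ P n ⊠ C.id 1) ⬙
        (Sd C γ P (n + 1) ⬙ ((WId C γ P n K2 ⊠ C.id 1) ⬙
          (Sd C γ P n ⊠ C.id 1)))))) :=
      Ecl hC (Ecl hC (EA hC (by omega) (by omega) _ _ _))
    _ ≃' (Hd C γ P n ⬙ (WId C γ P n K1 ⬙ ((Hd C γ P n ⊠ C.id 1) ⬙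
        ((Sd C γ P (n + 1) ⬙ (WId C γ P n K2 ⊠ C.id 1)) ⬙
          (Sd C γ P n ⊠ C.id 1))))) :=
      Ecl hC (Ecl hC (Ecl hC (EA hC (by omega) (by omega) _ _ _).symm))
    _ ≃' (Hd C γ P n ⬙ (WId C γ P n K1 ⬙ ((Hd C γ P n ⊠ C.id 1) ⬙
        (((WId C γ P n K2 ⊠ C.id 1) ⬙ Sd C γ P (n + 1)) ⬙
          (Sd C γ P n ⊠ C.id 1))))) :=
      Ecl hC (Ecl hC (Ecl hC (Ecr hC (hSW P hC n (WId C γ P n K2)))))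
    _ ≃' (Hd C γ P n ⬙ (WId C γ P n K1 ⬙ ((Hd C γ P n ⊠ C.id 1) ⬙
        ((WId C γ P n K2 ⊠ C.id 1) ⬙ (Sd C γ P (n + 1) ⬙
          (Sd C γ P n ⊠ C.id 1)))))) :=
      Ecl hC (Ecl hC (Ecl hC (EA hC (by omega) (by omega) _ _ _)))
    _ ≃' (Hd C γ P n ⬙ ((WId C γ P n K1 ⬙ (Hd C γ P n ⊠ C.id 1)) ⬙
        ((WId C γ P n K2 ⊠ C.id 1) ⬙ (Sd C γ P (n + 1) ⬙
          (Sd C γ P n ⊠ C.id 1))))) :=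
      Ecl hC (EA hC (by omega) (by omega) _ _ _).symm
    _ ≃' (Hd C γ P n ⬙ (((Hd C γ P n ⊠ C.id 1) ⬙ WId C γ P (n + 1) K1) ⬙
        ((WId C γ P n K2 ⊠ C.id 1) ⬙ (Sd C γ P (n + 1) ⬙
          (Sd C γ P n ⊠ C.id 1))))) := Ecl hC (Ecr hC hM1E)
    _ ≃' (Hd C γ P n ⬙ ((Hd C γ P n ⊠ C.id 1) ⬙ (WId C γ P (n + 1) K1 ⬙
        ((WId C γ P n K2 ⊠ C.id 1) ⬙ (Sd C γ P (n + 1) ⬙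
          (Sd C γ P n ⊠ C.id 1)))))) := Ecl hC (EA hC (by omega) (by omega) _ _ _)

theorem hcore (n : ℕ) (I J : Finset ℕ) (hI : ∀ a ∈ I, a < n) (hJ : ∀ a ∈ J, a < n) :
    E (Xd C γ P n I ⬙ ((Xd C γ P n J ⊠ C.id 1) ⬙ Gd C γ n))
      (Xd C γ P n J ⬙ (Xd C γ P n I ⊠ C.id 1)) := by
  have hM4E : E (WId C γ P (n + 1) I ⬙ (WId C γ P n J ⊠ C.id 1))
      ((WId C γ P n J ⊠ C.id 1) ⬙ WId C γ P (n + 1) I) :=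
    (E.hcp_comp _ _ rfl).trans ((E.of_eq (EM4 P hC n I J hI hJ)).trans
      (E.hcp_comp _ _ rfl).symm)
  have tailstep : E (((WId C γ P n J ⊠ C.id 1) ⬙ (WId C γ P (n + 1) I ⬙
      (Sd C γ P (n + 1) ⬙ (Sd C γ P n ⊠ C.id 1)))) ⬙ Gd C γ n)
      (Gd C γ n ⬙ (WId C γ P (n + 1) J ⬙ ((WId C γ P n I ⊠ C.id 1) ⬙
        (Sd C γ P (n + 1) ⬙ (Sd C γ P n ⊠ C.id 1))))) := by
    calc (((WId C γ P n J ⊠ C.id 1) ⬙ (WId C γ P (n + 1) I ⬙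
        (Sd C γ P (n + 1) ⬙ (Sd C γ P n ⊠ C.id 1)))) ⬙ Gd C γ n)
        ≃' ((WId C γ P n J ⊠ C.id 1) ⬙ ((WId C γ P (n + 1) I ⬙
          (Sd C γ P (n + 1) ⬙ (Sd C γ P n ⊠ C.id 1))) ⬙ Gd C γ n)) :=
        EA hC (by omega) (by omega) _ _ _
      _ ≃' ((WId C γ P n J ⊠ C.id 1) ⬙ (WId C γ P (n + 1) I ⬙
          ((Sd C γ P (n + 1) ⬙ (Sd C γ P n ⊠ C.id 1)) ⬙ Gd C γ n))) :=
        Ecl hC (EA hC (by omega) (by omega) _ _ _)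
      _ ≃' ((WId C γ P n J ⊠ C.id 1) ⬙ (WId C γ P (n + 1) I ⬙
          (Gd C γ n ⬙ (Sd C γ P (n + 1) ⬙ (Sd C γ P n ⊠ C.id 1))))) :=
        Ecl hC (Ecl hC (hGT P hC n).symm)
      _ ≃' ((WId C γ P n J ⊠ C.id 1) ⬙ ((WId C γ P (n + 1) I ⬙ Gd C γ n) ⬙
          (Sd C γ P (n + 1) ⬙ (Sd C γ P n ⊠ C.id 1)))) :=
        Ecl hC (EA hC (by omega) (by omega) _ _ _).symm
      _ ≃' ((WId C γ P n J ⊠ C.id 1) ⬙ ((Gd C γ n ⬙ (WId C γ P n I ⊠ C.id 1)) ⬙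
          (Sd C γ P (n + 1) ⬙ (Sd C γ P n ⊠ C.id 1)))) :=
        Ecl hC (Ecr hC (hAG P hC n I hI))
      _ ≃' ((WId C γ P n J ⊠ C.id 1) ⬙ (Gd C γ n ⬙ ((WId C γ P n I ⊠ C.id 1) ⬙
          (Sd C γ P (n + 1) ⬙ (Sd C γ P n ⊠ C.id 1))))) :=
        Ecl hC (EA hC (by omega) (by omega) _ _ _)
      _ ≃' (((WId C γ P n J ⊠ C.id 1) ⬙ Gd C γ n) ⬙ ((WId C γ P n I ⊠ C.id 1) ⬙
          (Sd C γ P (n + 1) ⬙ (Sd C γ P n ⊠ C.id 1)))) :=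
        (EA hC (by omega) (by omega) _ _ _).symm
      _ ≃' ((Gd C γ n ⬙ WId C γ P (n + 1) J) ⬙ ((WId C γ P n I ⊠ C.id 1) ⬙
          (Sd C γ P (n + 1) ⬙ (Sd C γ P n ⊠ C.id 1)))) :=
        Ecr hC (hGA P hC n J hJ).symm
      _ ≃' (Gd C γ n ⬙ (WId C γ P (n + 1) J ⬙ ((WId C γ P n I ⊠ C.id 1) ⬙
          (Sd C γ P (n + 1) ⬙ (Sd C γ P n ⊠ C.id 1))))) :=
        EA hC (by omega) (by omega) _ _ _
  calc (Xd C γ P n I ⬙ ((Xd C γ P n J ⊠ C.id 1) ⬙ Gd C γ n))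
      ≃' ((Xd C γ P n I ⬙ (Xd C γ P n J ⊠ C.id 1)) ⬙ Gd C γ n) :=
      (EA hC (by omega) (by omega) _ _ _).symm
    _ ≃' ((Hd C γ P n ⬙ ((Hd C γ P n ⊠ C.id 1) ⬙ (WId C γ P (n + 1) I ⬙
        ((WId C γ P n J ⊠ C.id 1) ⬙ (Sd C γ P (n + 1) ⬙
          (Sd C γ P n ⊠ C.id 1)))))) ⬙ Gd C γ n) := Ecr hC (hexp P hC n I J hI)
    _ ≃' ((Hd C γ P n ⬙ ((Hd C γ P n ⊠ C.id 1) ⬙ ((WId C γ P (n + 1) I ⬙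
        (WId C γ P n J ⊠ C.id 1)) ⬙ (Sd C γ P (n + 1) ⬙
          (Sd C γ P n ⊠ C.id 1))))) ⬙ Gd C γ n) :=
      Ecr hC (Ecl hC (Ecl hC (EA hC (by omega) (by omega) _ _ _).symm))
    _ ≃' ((Hd C γ P n ⬙ ((Hd C γ P n ⊠ C.id 1) ⬙ (((WId C γ P n J ⊠ C.id 1) ⬙
        WId C γ P (n + 1) I) ⬙ (Sd C γ P (n + 1) ⬙
          (Sd C γ P n ⊠ C.id 1))))) ⬙ Gd C γ n) :=
      Ecr hC (Ecl hC (Ecl hC (Ecr hC hM4E)))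
    _ ≃' ((Hd C γ P n ⬙ ((Hd C γ P n ⊠ C.id 1) ⬙ ((WId C γ P n J ⊠ C.id 1) ⬙
        (WId C γ P (n + 1) I ⬙ (Sd C γ P (n + 1) ⬙
          (Sd C γ P n ⊠ C.id 1)))))) ⬙ Gd C γ n) :=
      Ecr hC (Ecl hC (Ecl hC (EA hC (by omega) (by omega) _ _ _)))
    _ ≃' (Hd C γ P n ⬙ (((Hd C γ P n ⊠ C.id 1) ⬙ ((WId C γ P n J ⊠ C.id 1) ⬙
        (WId C γ P (n + 1) I ⬙ (Sd C γ P (n + 1) ⬙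
          (Sd C γ P n ⊠ C.id 1))))) ⬙ Gd C γ n)) := EA hC (by omega) (by omega) _ _ _
    _ ≃' (Hd C γ P n ⬙ ((Hd C γ P n ⊠ C.id 1) ⬙ (((WId C γ P n J ⊠ C.id 1) ⬙
        (WId C γ P (n + 1) I ⬙ (Sd C γ P (n + 1) ⬙
          (Sd C γ P n ⊠ C.id 1)))) ⬙ Gd C γ n))) :=
      Ecl hC (EA hC (by omega) (by omega) _ _ _)
    _ ≃' (Hd C γ P n ⬙ ((Hd C γ P n ⊠ C.id 1) ⬙ (Gd C γ n ⬙ (WId C γ P (n + 1) J ⬙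
        ((WId C γ P n I ⊠ C.id 1) ⬙ (Sd C γ P (n + 1) ⬙
          (Sd C γ P n ⊠ C.id 1))))))) := Ecl hC (Ecl hC tailstep)
    _ ≃' (Hd C γ P n ⬙ (((Hd C γ P n ⊠ C.id 1) ⬙ Gd C γ n) ⬙ (WId C γ P (n + 1) J ⬙
        ((WId C γ P n I ⊠ C.id 1) ⬙ (Sd C γ P (n + 1) ⬙
          (Sd C γ P n ⊠ C.id 1)))))) := Ecl hC (EA hC (by omega) (by omega) _ _ _).symm
    _ ≃' ((Hd C γ P n ⬙ ((Hd C γ P n ⊠ C.id 1) ⬙ Gd C γ n)) ⬙ (WId C γ P (n + 1) J ⬙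
        ((WId C γ P n I ⊠ C.id 1) ⬙ (Sd C γ P (n + 1) ⬙
          (Sd C γ P n ⊠ C.id 1))))) := (EA hC (by omega) (by omega) _ _ _).symm
    _ ≃' (((Hd C γ P n ⬙ (Hd C γ P n ⊠ C.id 1)) ⬙ Gd C γ n) ⬙ (WId C γ P (n + 1) J ⬙
        ((WId C γ P n I ⊠ C.id 1) ⬙ (Sd C γ P (n + 1) ⬙
          (Sd C γ P n ⊠ C.id 1))))) :=
      Ecr hC (EA hC (by omega) (by omega) _ _ _).symm
    _ ≃' ((Hd C γ P n ⬙ (Hd C γ P n ⊠ C.id 1)) ⬙ (WId C γ P (n + 1) J ⬙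
        ((WId C γ P n I ⊠ C.id 1) ⬙ (Sd C γ P (n + 1) ⬙
          (Sd C γ P n ⊠ C.id 1))))) := Ecr hC (hHH P hC n)
    _ ≃' (Hd C γ P n ⬙ ((Hd C γ P n ⊠ C.id 1) ⬙ (WId C γ P (n + 1) J ⬙
        ((WId C γ P n I ⊠ C.id 1) ⬙ (Sd C γ P (n + 1) ⬙
          (Sd C γ P n ⊠ C.id 1)))))) := EA hC (by omega) (by omega) _ _ _
    _ ≃' (Xd C γ P n J ⬙ (Xd C γ P n I ⊠ C.id 1)) := (hexp P hC n J I hJ).symm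

theorem main_exchange (n : ℕ) (I J : Finset ℕ)
    (hI : ∀ a ∈ I, a < n) (hJ : ∀ a ∈ J, a < n) :
    C.comp (Xd C γ P n I) (Xd C γ P (n + 1) J) =
      C.comp (Xd C γ P n J) (C.comp (Xd C γ P (n + 1) I) (Gd C γ n)) := by
  refine E.eq ?_
  calc C.comp (Xd C γ P n I) (Xd C γ P (n + 1) J)
      ≃' (Xd C γ P n I ⬙ Xd C γ P (n + 1) J) := (E.hcp_comp _ _ rfl).symm
    _ ≃' (Xd C γ P n I ⬙ ((Xd C γ P n J ⊠ C.id 1) ⬙ Gd C γ n)) :=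
      Ecl hC (hdagger P hC n J hJ)
    _ ≃' (Xd C γ P n J ⬙ (Xd C γ P n I ⊠ C.id 1)) := hcore P hC n I J hI hJ
    _ ≃' (Xd C γ P n J ⬙ ((Xd C γ P n I ⊠ C.id 1) ⬙ C.id (n + 2))) :=
      Ecl hC (Ehcp_id_right hC _ (by omega)).symm
    _ ≃' (Xd C γ P n J ⬙ ((Xd C γ P n I ⊠ C.id 1) ⬙ (Gd C γ n ⬙ Gd C γ n))) :=
      Ecl hC (Ecl hC (hGG hC n).symm)
    _ ≃' (Xd C γ P n J ⬙ (((Xd C γ P n I ⊠ C.id 1) ⬙ Gd C γ n) ⬙ Gd C γ n)) :=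
      Ecl hC (EA hC (by omega) (by omega) _ _ _).symm
    _ ≃' (Xd C γ P n J ⬙ (Xd C γ P (n + 1) I ⬙ Gd C γ n)) :=
      Ecl hC (Ecr hC (hdagger P hC n I hI).symm)
    _ ≃' C.comp (Xd C γ P n J) (C.comp (Xd C γ P (n + 1) I) (Gd C γ n)) :=
      (Ecomp2 hC _ _ _).symm

end Assemble
end XProof

/-- the exchange identity
`X^{n+1}_J ∘ X^n_I = G^n ∘ X^{n+1}_I ∘ X^n_J` for `I, J ⊆ [n]`
(composition written in diagrammatic order). -/
theorem X_exchange
    (C : MonCatN) (γ : ∀ m n : ℕ, C.Hom (m + n) (n + m))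
    (hC : IsStrictSymMon C γ) (P : PoalgebraIn C γ)
    (n : ℕ) (I J : Finset ℕ) (hI : ∀ a ∈ I, a < n) (hJ : ∀ a ∈ J, a < n) :
    C.comp (Xd C γ P n I) (Xd C γ P (n + 1) J) =
      C.comp (Xd C γ P n J) (C.comp (Xd C γ P (n + 1) I) (Gd C γ n)) :=
  XProof.main_exchange P hC n I J hI hJ
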